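/- arXiv:2209.10878 — 4 statements merged into one kernel-verified Lean document; each statement's English description precedes it below -/
import Mathlib

section
/- Let γ_A > 0, and let η_min ≤ ηᵢ ≤ η_max with η_min > 0 for i = 1,…,d, and c₁,…,c_d ≥ 0 with S := Σᵢ cᵢ > 0. Then Σᵢ (ηᵢ²/(γ_A + ηᵢ)) cᵢ − (Σᵢ ηᵢ cᵢ)²/(Σᵢ (γ_A + ηᵢ) cᵢ) ≤ (η_max²/(γ_A + η_min) − η_min²/(γ_A + η_max)) · S. -/
/-- the value-of-information gap is bounded by
`(η_max²/(γ_A+η_min) − η_min²/(γ_A+η_max)) · Σᵢ cᵢ`. -/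
theorem stmt6 (d : ℕ) (γA ηmin ηmax : ℝ) (hγA : 0 < γA) (hmin : 0 < ηmin)
    (η c : Fin d → ℝ) (hη : ∀ i, ηmin ≤ η i ∧ η i ≤ ηmax)
    (hc : ∀ i, 0 ≤ c i) (hsum : 0 < ∑ i, c i) :
    (∑ i, (η i) ^ 2 / (γA + η i) * c i)
        - (∑ i, η i * c i) ^ 2 / (∑ i, (γA + η i) * c i)
      ≤ (ηmax ^ 2 / (γA + ηmin) - ηmin ^ 2 / (γA + ηmax)) * ∑ i, c i := by
  set S := ∑ i, c i with hS
  have hne : Nonempty (Fin d) := by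
    by_contra h
    simp only [not_nonempty_iff] at h
    rw [hS, Finset.sum_of_isEmpty] at hsum
    exact lt_irrefl 0 hsum
  obtain ⟨i0⟩ := hne
  have hmm : ηmin ≤ ηmax := le_trans (hη i0).1 (hη i0).2
  have h1 : (0:ℝ) < γA + ηmin := by linarith
  have h2 : (0:ℝ) < γA + ηmax := by linarith
  -- bound first sum
  have hA : (∑ i, (η i) ^ 2 / (γA + η i) * c i) ≤ ηmax ^ 2 / (γA + ηmin) * S := by
    rw [hS, Finset.mul_sum]
    apply Finset.sum_le_sum
    intro i _
    apply mul_le_mul_of_nonneg_right _ (hc i)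
    apply div_le_div₀ (by positivity)
    · apply pow_le_pow_left₀ (le_of_lt (lt_of_lt_of_le hmin (hη i).1)) (hη i).2
    · exact h1
    · linarith [(hη i).1]
  -- lower bound on numerator of second term
  have hB : ηmin * S ≤ ∑ i, η i * c i := by
    rw [hS, Finset.mul_sum]
    exact Finset.sum_le_sum fun i _ => mul_le_mul_of_nonneg_right (hη i).1 (hc i)
  have hBpos : 0 ≤ ηmin * S := by positivity
  -- bounds on denominator
  have hClo : (γA + ηmin) * S ≤ ∑ i, (γA + η i) * c i := by
    rw [hS, Finset.mul_sum]
    exact Finset.sum_le_sum fun i _ =>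
      mul_le_mul_of_nonneg_right (by linarith [(hη i).1]) (hc i)
  have hChi : (∑ i, (γA + η i) * c i) ≤ (γA + ηmax) * S := by
    rw [hS, Finset.mul_sum]
    exact Finset.sum_le_sum fun i _ =>
      mul_le_mul_of_nonneg_right (by linarith [(hη i).2]) (hc i)
  have hCpos : 0 < ∑ i, (γA + η i) * c i := lt_of_lt_of_le (by positivity) hClo
  have hfrac : ηmin ^ 2 / (γA + ηmax) * S ≤
      (∑ i, η i * c i) ^ 2 / (∑ i, (γA + η i) * c i) := by
    have key : (ηmin * S) ^ 2 / ((γA + ηmax) * S) ≤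
        (∑ i, η i * c i) ^ 2 / (∑ i, (γA + η i) * c i) := by
      apply div_le_div₀ (by positivity) _ hCpos hChi
      exact pow_le_pow_left₀ hBpos hB 2
    have heq : (ηmin * S) ^ 2 / ((γA + ηmax) * S) = ηmin ^ 2 / (γA + ηmax) * S := by
      field_simp
    linarith [key, heq ▸ key]
  have := sub_le_sub hA hfrac
  calc (∑ i, (η i) ^ 2 / (γA + η i) * c i)
        - (∑ i, η i * c i) ^ 2 / (∑ i, (γA + η i) * c i)
      ≤ ηmax ^ 2 / (γA + ηmin) * S - ηmin ^ 2 / (γA + ηmax) * S := this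
    _ = (ηmax ^ 2 / (γA + ηmin) - ηmin ^ 2 / (γA + ηmax)) * S := by ring
end

section
/- Let γ_A, γ_P > 0, κ > 0 and Γ = κ I_d. Set D = γ_A I_d + Γ⁻¹. Then the matrix identity holds: γ_P I_d − (γ_P I_d + Γ⁻¹)(γ_P I_d + D)⁻¹(γ_P I_d + Γ⁻¹) = (γ_P I_d − b*(γ_P I_d + Γ⁻¹)), where b* = (γ_P + 1/κ)/(γ_A + γ_P + 1/κ). Consequently φ₀ = χ₀ for radial costs, i.e., the value of information vanishes. -/
open Matrix MeasureTheory

lemma smul_one_inv' (d : ℕ) (c : ℝ) (hc : c ≠ 0) :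
    (c • (1 : Matrix (Fin d) (Fin d) ℝ))⁻¹ = c⁻¹ • 1 := by
  apply Matrix.inv_eq_right_inv
  rw [smul_mul_assoc, Matrix.mul_smul, one_mul, smul_smul, mul_inv_cancel₀ hc, one_smul]

lemma key (d : ℕ) (γA γP κ : ℝ) (hA : 0 < γA) (hP : 0 < γP) (hκ : 0 < κ) :
    γP • (1 : Matrix (Fin d) (Fin d) ℝ)
        - (γP • (1 : Matrix (Fin d) (Fin d) ℝ) + (κ • (1 : Matrix (Fin d) (Fin d) ℝ))⁻¹)
          * ((γA + γP) • (1 : Matrix (Fin d) (Fin d) ℝ)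
              + (κ • (1 : Matrix (Fin d) (Fin d) ℝ))⁻¹)⁻¹
          * (γP • (1 : Matrix (Fin d) (Fin d) ℝ) + (κ • (1 : Matrix (Fin d) (Fin d) ℝ))⁻¹)
      = γP • (1 : Matrix (Fin d) (Fin d) ℝ)
        - ((γP + 1 / κ) / (γA + γP + 1 / κ))
            • (γP • (1 : Matrix (Fin d) (Fin d) ℝ)
                + (κ • (1 : Matrix (Fin d) (Fin d) ℝ))⁻¹) := by
  have hκ' : κ ≠ 0 := hκ.ne'
  have hB : γA + γP + κ⁻¹ ≠ 0 := by positivity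
  rw [smul_one_inv' d κ hκ', ← add_smul, ← add_smul,
    smul_one_inv' d _ hB]
  simp only [smul_mul_assoc, Matrix.mul_smul, one_mul, mul_one, smul_smul]
  congr 1
  field_simp

/-- for the radial cost `Γ = κ I` and `D = γ_A I + Γ⁻¹`, the matrix
identity `γ_P I − (γ_P I + Γ⁻¹)(γ_P I + D)⁻¹(γ_P I + Γ⁻¹) = γ_P I − b*(γ_P I + Γ⁻¹)`
holds with `b* = (γ_P + 1/κ)/(γ_A + γ_P + 1/κ)`; consequently `φ₀ = χ₀`, i.e. the
value of information vanishes for radial costs. -/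
theorem stmt10 (d : ℕ) (γA γP κ : ℝ) (hA : 0 < γA) (hP : 0 < γP) (hκ : 0 < κ)
    (T : ℝ) (K : ℝ → Fin d → ℝ) :
    (γP • (1 : Matrix (Fin d) (Fin d) ℝ)
        - (γP • (1 : Matrix (Fin d) (Fin d) ℝ) + (κ • (1 : Matrix (Fin d) (Fin d) ℝ))⁻¹)
          * (γP • (1 : Matrix (Fin d) (Fin d) ℝ)
              + (γA • (1 : Matrix (Fin d) (Fin d) ℝ)
                  + (κ • (1 : Matrix (Fin d) (Fin d) ℝ))⁻¹))⁻¹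
          * (γP • (1 : Matrix (Fin d) (Fin d) ℝ) + (κ • (1 : Matrix (Fin d) (Fin d) ℝ))⁻¹)
      = γP • (1 : Matrix (Fin d) (Fin d) ℝ)
        - ((γP + 1 / κ) / (γA + γP + 1 / κ))
            • (γP • (1 : Matrix (Fin d) (Fin d) ℝ) + (κ • (1 : Matrix (Fin d) (Fin d) ℝ))⁻¹)) ∧
    ((γP / 2) * ∫ s in (0:ℝ)..T, K s ⬝ᵥ
        (γP • (1 : Matrix (Fin d) (Fin d) ℝ)
          - (γP • (1 : Matrix (Fin d) (Fin d) ℝ) + (κ • (1 : Matrix (Fin d) (Fin d) ℝ))⁻¹)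
            * ((γA + γP) • (1 : Matrix (Fin d) (Fin d) ℝ)
                + (κ • (1 : Matrix (Fin d) (Fin d) ℝ))⁻¹)⁻¹
            * (γP • (1 : Matrix (Fin d) (Fin d) ℝ)
                + (κ • (1 : Matrix (Fin d) (Fin d) ℝ))⁻¹)).mulVec (K s)
      = (γP / 2) * ∫ s in (0:ℝ)..T, K s ⬝ᵥ
        (γP • (1 : Matrix (Fin d) (Fin d) ℝ)
          - ((γP + 1 / κ) / (γA + γP + 1 / κ))
              • (γP • (1 : Matrix (Fin d) (Fin d) ℝ)
                  + (κ • (1 : Matrix (Fin d) (Fin d) ℝ))⁻¹)).mulVec (K s)) := by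
  have hk := key d γA γP κ hA hP hκ
  constructor
  · have : γP • (1 : Matrix (Fin d) (Fin d) ℝ)
        + (γA • (1 : Matrix (Fin d) (Fin d) ℝ) + (κ • (1 : Matrix (Fin d) (Fin d) ℝ))⁻¹)
        = (γA + γP) • (1 : Matrix (Fin d) (Fin d) ℝ)
            + (κ • (1 : Matrix (Fin d) (Fin d) ℝ))⁻¹ := by
      rw [add_smul]; abel
    rw [this, hk]
  · rw [hk]
end

section
/- Let A be a symmetric positive-definite d×d real matrix and γ_A > 0. Then for every nonzero vector v ∈ ℝ^d: ⟨v, A(γ_A I_d + A)⁻¹ A v⟩ − ⟨v, Av⟩² / ⟨v, (γ_A I_d + A)v⟩ ≥ 0. -/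
open Matrix
open scoped MatrixOrder

/-- for `A` symmetric positive definite and `γ_A > 0`, for every nonzero `v`,
`⟨v, A(γ_A I + A)⁻¹ A v⟩ − ⟨v, Av⟩²/⟨v, (γ_A I + A)v⟩ ≥ 0`. -/
theorem stmt11 (d : ℕ) (A : Matrix (Fin d) (Fin d) ℝ) (hAsym : A.IsSymm) (hA : A.PosDef)
    (γA : ℝ) (hγA : 0 < γA) (v : Fin d → ℝ) (hv : v ≠ 0) :
    0 ≤ v ⬝ᵥ (A * (γA • (1 : Matrix (Fin d) (Fin d) ℝ) + A)⁻¹ * A).mulVec v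
        - (v ⬝ᵥ A.mulVec v) ^ 2
            / (v ⬝ᵥ (γA • (1 : Matrix (Fin d) (Fin d) ℝ) + A).mulVec v) := by
  set B : Matrix (Fin d) (Fin d) ℝ := γA • (1 : Matrix (Fin d) (Fin d) ℝ) + A with hBdef
  have hγ1 : (γA • (1 : Matrix (Fin d) (Fin d) ℝ)).PosSemidef := by
    rw [smul_one_eq_diagonal]
    exact posSemidef_diagonal_iff.mpr fun i => hγA.le
  have hB : B.PosDef := Matrix.PosDef.posSemidef_add hγ1 hA
  have hBunit : IsUnit B.det := hB.det_pos.ne'.isUnit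
  have hBZ : 0 < v ⬝ᵥ B.mulVec v := by
    have := hB.dotProduct_mulVec_pos hv
    simpa using this
  have hAT : Aᵀ = A := hAsym
  -- square root
  set S := CFC.sqrt B with hSdef
  have hSS : S * S = B := CFC.sqrt_mul_sqrt_self B hB.posSemidef.nonneg
  have hSsym : Sᵀ = S := by
    have := (CFC.sqrt_nonneg B).posSemidef.1
    simpa [Matrix.IsHermitian] using this
  set z : Fin d → ℝ := B⁻¹.mulVec (A.mulVec v) with hzdef
  have key1 : v ⬝ᵥ A.mulVec v = (S.mulVec v) ⬝ᵥ (S.mulVec z) := by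
    have hBz : B.mulVec z = A.mulVec v := by
      rw [hzdef, mulVec_mulVec, mul_nonsing_inv _ hBunit, one_mulVec]
    calc v ⬝ᵥ A.mulVec v = v ⬝ᵥ B.mulVec z := by rw [hBz]
      _ = v ⬝ᵥ (S * S).mulVec z := by rw [hSS]
      _ = v ⬝ᵥ S.mulVec (S.mulVec z) := by rw [← mulVec_mulVec]
      _ = (S.mulVec v) ⬝ᵥ (S.mulVec z) := by
          rw [Matrix.dotProduct_mulVec, ← hSsym, Matrix.vecMul_transpose, hSsym]
  have key2 : (S.mulVec v) ⬝ᵥ (S.mulVec v) = v ⬝ᵥ B.mulVec v := by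
    rw [Matrix.dotProduct_mulVec, ← hSsym, Matrix.vecMul_transpose, hSsym,
      mulVec_mulVec, hSS, dotProduct_comm, Matrix.dotProduct_mulVec, ← hB.1]
  have key3 : (S.mulVec z) ⬝ᵥ (S.mulVec z) = v ⬝ᵥ (A * B⁻¹ * A).mulVec v := by
    have hzBz : (S.mulVec z) ⬝ᵥ (S.mulVec z) = z ⬝ᵥ B.mulVec z := by
      rw [Matrix.dotProduct_mulVec, ← hSsym, Matrix.vecMul_transpose, hSsym,
        mulVec_mulVec, hSS, dotProduct_comm, Matrix.dotProduct_mulVec, ← hB.1]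
    rw [hzBz, hzdef, mulVec_mulVec, mulVec_mulVec, ← mul_assoc,
      mul_nonsing_inv _ hBunit, one_mul]
    have hvA : v ᵥ* A = A *ᵥ v := by
      conv_lhs => rw [← hAT]
      exact Matrix.vecMul_transpose ..
    rw [mul_assoc A B⁻¹ A, ← mulVec_mulVec v A (B⁻¹ * A),
      Matrix.dotProduct_mulVec v A, hvA, ← mulVec_mulVec v B⁻¹ A, dotProduct_comm]
  -- Cauchy-Schwarz
  have cs : ((S.mulVec v) ⬝ᵥ (S.mulVec z)) ^ 2
      ≤ ((S.mulVec v) ⬝ᵥ (S.mulVec v)) * ((S.mulVec z) ⬝ᵥ (S.mulVec z)) := by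
    have h := Finset.sum_mul_sq_le_sq_mul_sq Finset.univ (S.mulVec v) (S.mulVec z)
    simpa [dotProduct, sq, mul_assoc, mul_comm, mul_left_comm] using h
  rw [sub_nonneg, div_le_iff₀ hBZ, key1]
  calc ((S.mulVec v) ⬝ᵥ (S.mulVec z)) ^ 2
      ≤ ((S.mulVec v) ⬝ᵥ (S.mulVec v)) * ((S.mulVec z) ⬝ᵥ (S.mulVec z)) := cs
    _ = v ⬝ᵥ (A * B⁻¹ * A).mulVec v * (v ⬝ᵥ B.mulVec v) := by
        rw [key2, key3]; ring
end

section
/- Let μ : ℬ([0,T]) → ℝ^{d×d} be a matrix-valued measure of bounded variation and let R : [0,T] → ℝ^{d×d} be its differential resolvent, i.e., the unique locally absolutely continuous function with R(0) = I_d and R'(t) = (μ * R)(t) = (R * μ)(t) for a.e. t. Let h : [0,T] → ℝ^d be locally integrable, X₀ ∈ ℝ^d, σ ∈ ℝ^{d×d}, and B a d-dimensional Brownian motion. Then X_t = R(t)X₀ + ∫₀^t R(t−s)h(s)ds + ∫₀^t R(t−s)σ dB_s is a continuous semimartingale solving dX_t = (h(t) + ∫_{[0,t]} μ(ds) X_{t−s})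 dt + σ dB_t with X₀ as initial condition. -/
open MeasureTheory Matrix

/-- The convolution `(μ * f)(t) = ∫_{[0,t]} μ(ds) f(t−s)` of a vector-valued function
with a matrix-valued measure of bounded variation, the latter encoded as a difference
`μ = μp − μn` of matrices of finite (nonnegative) measures. -/
noncomputable def measConvVec (d : ℕ) (μp μn : Fin d → Fin d → Measure ℝ)
    (f : ℝ → Fin d → ℝ) (t : ℝ) : Fin d → ℝ :=
  fun i => ∑ j, ((∫ s in Set.Icc (0:ℝ) t, f (t - s) j ∂(μp i j))
    - ∫ s in Set.Icc (0:ℝ) t, f (t - s) j ∂(μn i j))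

/-- The convolution `(μ * R)(t) = ∫_{[0,t]} μ(ds) R(t−s)` for a matrix-valued function. -/
noncomputable def measConvMat (d : ℕ) (μp μn : Fin d → Fin d → Measure ℝ)
    (R : ℝ → Matrix (Fin d) (Fin d) ℝ) (t : ℝ) : Matrix (Fin d) (Fin d) ℝ :=
  Matrix.of fun i k => ∑ j, ((∫ s in Set.Icc (0:ℝ) t, R (t - s) j k ∂(μp i j))
    - ∫ s in Set.Icc (0:ℝ) t, R (t - s) j k ∂(μn i j))

section S16aux
open Set
open scoped ENNReal NNReal

namespace S16

/-- "bounded measurable on `[0,T]`" -/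
def BM (T : ℝ) (g : ℝ → ℝ) : Prop :=
  Measurable g ∧ ∃ C, 0 ≤ C ∧ ∀ x ∈ Set.Icc 0 T, |g x| ≤ C

lemma BM.of_continuous {T : ℝ} {g : ℝ → ℝ} (hg : Continuous g) : BM T g := by
  refine ⟨hg.measurable, ?_⟩
  obtain ⟨C, hC⟩ := isCompact_Icc.exists_bound_of_continuousOn
    (hg.continuousOn : ContinuousOn g (Icc 0 T))
  refine ⟨max C 0, le_max_right _ _, fun x hx => ?_⟩
  have := hC x hx
  rw [Real.norm_eq_abs] at this
  exact this.trans (le_max_left _ _)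

lemma BM.sub {T : ℝ} {g₁ g₂ : ℝ → ℝ} (h₁ : BM T g₁) (h₂ : BM T g₂) :
    BM T (fun x => g₁ x - g₂ x) := by
  obtain ⟨C₁, hC₁0, hC₁⟩ := h₁.2
  obtain ⟨C₂, hC₂0, hC₂⟩ := h₂.2
  refine ⟨h₁.1.sub h₂.1, C₁ + C₂, by linarith, fun x hx => ?_⟩
  calc |g₁ x - g₂ x| ≤ |g₁ x| + |g₂ x| := abs_sub _ _
    _ ≤ C₁ + C₂ := add_le_add (hC₁ x hx) (hC₂ x hx)

lemma BM.add {T : ℝ} {g₁ g₂ : ℝ → ℝ} (h₁ : BM T g₁) (h₂ : BM T g₂) :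
    BM T (fun x => g₁ x + g₂ x) := by
  obtain ⟨C₁, hC₁0, hC₁⟩ := h₁.2
  obtain ⟨C₂, hC₂0, hC₂⟩ := h₂.2
  refine ⟨h₁.1.add h₂.1, C₁ + C₂, by linarith, fun x hx => ?_⟩
  calc |g₁ x + g₂ x| ≤ |g₁ x| + |g₂ x| := abs_add_le _ _
    _ ≤ C₁ + C₂ := add_le_add (hC₁ x hx) (hC₂ x hx)

lemma BM.finset_sum {T : ℝ} {ι : Type*} (s : Finset ι) {g : ι → ℝ → ℝ}
    (hg : ∀ i ∈ s, BM T (g i)) : BM T (fun x => ∑ i ∈ s, g i x) := by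
  classical
  induction s using Finset.induction_on with
  | empty => exact ⟨by simpa using measurable_const, 0, le_refl _, by simp⟩
  | insert a s hni ih =>
    have h1 := hg a (Finset.mem_insert_self a s)
    have h2 := ih (fun i hi => hg i (Finset.mem_insert_of_mem hi))
    have : (fun x => ∑ i ∈ insert a s, g i x)
        = fun x => g a x + ∑ i ∈ s, g i x := by
      funext x; rw [Finset.sum_insert hni]
    rw [this]
    exact h1.add h2

lemma BM.integrableOn_vol {T : ℝ} {g : ℝ → ℝ} (hg : BM T g) {A : Set ℝ}
    (hA : MeasurableSet A) (hsub : A ⊆ Icc 0 T) : IntegrableOn g A volume := by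
  obtain ⟨C, hC0, hC⟩ := hg.2
  have hfin : volume A < ⊤ :=
    lt_of_le_of_lt (measure_mono hsub) (by simp [Real.volume_Icc])
  refine Integrable.mono' ((integrableOn_const (C := C) hfin.ne))
    hg.1.aestronglyMeasurable ?_
  exact ae_restrict_of_forall_mem hA fun x hx => by
    simpa [Real.norm_eq_abs] using hC x (hsub hx)

lemma BM.intervalIntegrable {T : ℝ} {g : ℝ → ℝ} (hg : BM T g) {a b : ℝ}
    (ha : 0 ≤ a) (hab : a ≤ b) (hb : b ≤ T) : IntervalIntegrable g volume a b := by
  rw [intervalIntegrable_iff_integrableOn_Ioc_of_le hab]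
  exact hg.integrableOn_vol measurableSet_Ioc fun x hx =>
    ⟨le_trans ha (le_of_lt hx.1), le_trans hx.2 hb⟩

lemma BM.conv_integrand_integrable {T : ℝ} {g : ℝ → ℝ} (hg : BM T g)
    (ν : Measure ℝ) [IsFiniteMeasure ν] {s : ℝ} (h0 : 0 ≤ s) (hsT : s ≤ T) :
    Integrable (fun r => g (s - r)) (ν.restrict (Icc 0 s)) := by
  obtain ⟨C, hC0, hC⟩ := hg.2
  refine Integrable.mono' (integrable_const C)
    ((hg.1.comp (measurable_const.sub measurable_id)).aestronglyMeasurable) ?_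
  exact ae_restrict_of_forall_mem measurableSet_Icc fun r hr => by
    rw [Real.norm_eq_abs]
    exact hC _ ⟨by linarith [hr.2], by linarith [hr.1]⟩

/-- joint measurability of the triangle-indicator kernel -/
lemma meas_ind_sub {f : ℝ → ℝ} (hf : Measurable f) :
    Measurable (fun p : ℝ × ℝ =>
      ({q : ℝ × ℝ | 0 ≤ q.2 ∧ q.2 ≤ q.1}).indicator (fun q => f (q.1 - q.2)) p) := by
  refine Measurable.indicator (hf.comp (measurable_fst.sub measurable_snd)) ?_
  exact (measurableSet_le measurable_const measurable_snd).inter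
    (measurableSet_le measurable_snd measurable_fst)

lemma ind_eq (f : ℝ → ℝ) (s r : ℝ) :
    ({q : ℝ × ℝ | 0 ≤ q.2 ∧ q.2 ≤ q.1}).indicator (fun q => f (q.1 - q.2)) (s, r)
      = (Icc 0 s).indicator (fun r => f (s - r)) r := by
  by_cases h : 0 ≤ r ∧ r ≤ s
  · rw [Set.indicator_of_mem (by exact h) _, Set.indicator_of_mem (by exact ⟨h.1, h.2⟩)]
  · rw [Set.indicator_of_notMem (by exact h) _,
      Set.indicator_of_notMem (by rw [Set.mem_Icc]; exact h)]

lemma BM.conv {T : ℝ} {g : ℝ → ℝ} (hg : BM T g) (ν : Measure ℝ) [IsFiniteMeasure ν] :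
    BM T (fun s => ∫ r in Icc 0 s, g (s - r) ∂ν) := by
  obtain ⟨C, hC0, hC⟩ := hg.2
  constructor
  · have heq : (fun s => ∫ r in Icc 0 s, g (s - r) ∂ν)
        = fun s => ∫ r, ({q : ℝ × ℝ | 0 ≤ q.2 ∧ q.2 ≤ q.1}).indicator
            (fun q => g (q.1 - q.2)) (s, r) ∂ν := by
      funext s
      rw [← integral_indicator measurableSet_Icc]
      exact integral_congr_ae (Filter.Eventually.of_forall fun r => (ind_eq g s r).symm)
    rw [heq]
    exact (MeasureTheory.StronglyMeasurable.integral_prod_right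
      (f := fun s r => ({q : ℝ × ℝ | 0 ≤ q.2 ∧ q.2 ≤ q.1}).indicator
        (fun q => g (q.1 - q.2)) (s, r))
      (by exact (meas_ind_sub hg.1).stronglyMeasurable)).measurable
  · refine ⟨C * (ν univ).toReal, by positivity, fun s hs => ?_⟩
    have h1 : |∫ r in Icc 0 s, g (s - r) ∂ν| ≤ C * ((ν.restrict (Icc 0 s)) univ).toReal := by
      rw [← Real.norm_eq_abs]
      refine norm_integral_le_of_norm_le_const ?_
      exact ae_restrict_of_forall_mem measurableSet_Icc fun r hr => by
        rw [Real.norm_eq_abs]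
        exact hC _ ⟨by linarith [hr.2], by linarith [hs.1, hr.1, hs.2, hr.2]⟩
    refine h1.trans ?_
    have : ((ν.restrict (Icc 0 s)) univ).toReal ≤ (ν univ).toReal := by
      rw [Measure.restrict_apply_univ]
      exact ENNReal.toReal_mono (measure_ne_top _ _) (measure_mono (subset_univ _))
    exact mul_le_mul_of_nonneg_left this hC0

lemma vol_restrict_singleton (A : Set ℝ) (r : ℝ) : (volume.restrict A) {r} = 0 :=
  le_antisymm (le_trans (Measure.restrict_le_self _) (by simp)) (by simp)

lemma ae_ne_restrict (A : Set ℝ) (r : ℝ) : ∀ᵐ s ∂(volume.restrict A), s ≠ r := by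
  rw [MeasureTheory.ae_iff]
  refine measure_mono_null ?_ (vol_restrict_singleton A r)
  intro x hx
  simp only [mem_setOf_eq, not_not] at hx
  simp [hx]

lemma swap1 (ν : Measure ℝ) [IsFiniteMeasure ν] {t : ℝ} (ht : 0 ≤ t)
    {f : ℝ → ℝ} (hfm : Measurable f) (hfi : IntegrableOn f (Icc 0 t)) :
    ∫ s in (0:ℝ)..t, ∫ r in Icc 0 s, f (s - r) ∂ν
      = ∫ r in Icc 0 t, (∫ v in (0:ℝ)..(t - r), f v) ∂ν := by
  set F : ℝ × ℝ → ℝ :=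
    fun q => ({q : ℝ × ℝ | 0 ≤ q.2 ∧ q.2 ≤ q.1}).indicator (fun q => f (q.1 - q.2)) q with hF
  have hFm : Measurable F := meas_ind_sub hfm
  have hK : (∫⁻ x in Icc 0 t, ‖f x‖₊ ∂volume) < ⊤ := hfi.2
  have hprod : Integrable (Function.uncurry fun s r => F (s, r))
      ((volume.restrict (Ioc 0 t)).prod ν) := by
    constructor
    · exact (hFm.comp (measurable_fst.prodMk measurable_snd)).aestronglyMeasurable
    · have hmeq : ∫⁻ p, ‖(Function.uncurry fun s r => F (s, r)) p‖₊
            ∂((volume.restrict (Ioc 0 t)).prod ν)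
          = ∫⁻ r, ∫⁻ s, (‖F (s, r)‖₊ : ℝ≥0∞) ∂(volume.restrict (Ioc 0 t)) ∂ν := by
        exact lintegral_prod_symm _ (hFm.enorm.comp
          (measurable_fst.prodMk measurable_snd)).aemeasurable
      refine lt_of_le_of_lt (le_of_eq hmeq) ?_
      have key : ∀ r : ℝ, (∫⁻ s in Ioc 0 t, (‖F (s, r)‖₊ : ℝ≥0∞) ∂volume)
          ≤ ∫⁻ x in Icc 0 t, ‖f x‖₊ ∂volume := by
        intro r
        have hb : ∀ s ∈ Ioc (0:ℝ) t, (‖F (s, r)‖₊ : ℝ≥0∞)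
            ≤ (Icc 0 t).indicator (fun x => (‖f x‖₊ : ℝ≥0∞)) (s - r) := by
          intro s hs
          by_cases hcond : 0 ≤ r ∧ r ≤ s
          · have hmem : s - r ∈ Icc (0:ℝ) t :=
              ⟨by linarith [hcond.1, hcond.2], by linarith [hs.2, hcond.1]⟩
            rw [hF]
            simp only []
            rw [Set.indicator_of_mem (by exact hcond : (s,r) ∈ {q : ℝ × ℝ | 0 ≤ q.2 ∧ q.2 ≤ q.1})]
            rw [Set.indicator_of_mem hmem]
          · rw [hF]
            simp only []
            rw [Set.indicator_of_notMem (by exact hcond : (s,r) ∉ {q : ℝ × ℝ | 0 ≤ q.2 ∧ q.2 ≤ q.1})]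
            simp
        calc ∫⁻ s in Ioc 0 t, (‖F (s, r)‖₊ : ℝ≥0∞) ∂volume
            ≤ ∫⁻ s in Ioc 0 t, (Icc 0 t).indicator (fun x => (‖f x‖₊ : ℝ≥0∞)) (s - r)
              ∂volume := by
              refine setLIntegral_mono ?_ hb
              exact (hfm.enorm.indicator measurableSet_Icc).comp
                (measurable_id.sub measurable_const)
          _ ≤ ∫⁻ s, (Icc 0 t).indicator (fun x => (‖f x‖₊ : ℝ≥0∞)) (s - r) ∂volume :=
              setLIntegral_le_lintegral _ _
          _ = ∫⁻ x, (Icc 0 t).indicator (fun x => (‖f x‖₊ : ℝ≥0∞)) x ∂volume := by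
              simp only [sub_eq_add_neg]
              exact lintegral_add_right_eq_self _ (-r)
          _ = ∫⁻ x in Icc 0 t, ‖f x‖₊ ∂volume := lintegral_indicator measurableSet_Icc _
      calc ∫⁻ r, ∫⁻ s, (‖F (s, r)‖₊ : ℝ≥0∞) ∂(volume.restrict (Ioc 0 t)) ∂ν
          ≤ ∫⁻ _, (∫⁻ x in Icc 0 t, ‖f x‖₊ ∂volume) ∂ν := lintegral_mono key
        _ = (∫⁻ x in Icc 0 t, ‖f x‖₊ ∂volume) * ν univ := lintegral_const _
        _ < ⊤ := ENNReal.mul_lt_top hK (measure_lt_top _ _)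
  rw [intervalIntegral.integral_of_le ht]
  have L1 : ∫ s in Ioc 0 t, (∫ r in Icc 0 s, f (s - r) ∂ν) ∂volume
      = ∫ s in Ioc 0 t, (∫ r, F (s, r) ∂ν) ∂volume := by
    refine setIntegral_congr_fun measurableSet_Ioc fun s _ => ?_
    rw [← integral_indicator measurableSet_Icc]
    exact integral_congr_ae (Filter.Eventually.of_forall fun r => (ind_eq f s r).symm)
  rw [L1, MeasureTheory.integral_integral_swap hprod]
  rw [← integral_indicator (μ := ν) (f := fun r => ∫ v in (0:ℝ)..(t - r), f v) measurableSet_Icc]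
  congr 1
  funext r
  by_cases hr : r ∈ Icc (0:ℝ) t
  · rw [Set.indicator_of_mem hr]
    have hII : IntervalIntegrable f volume 0 t :=
      (intervalIntegrable_iff_integrableOn_Icc_of_le ht).2 hfi
    have hII2 : IntervalIntegrable (fun x => f (x - r)) volume r t := by
      have h1 : IntervalIntegrable f volume 0 (t - r) := by
        refine hII.mono_set ?_
        rw [Set.uIcc_of_le (by linarith [hr.1, hr.2]), Set.uIcc_of_le ht]
        exact Set.Icc_subset_Icc le_rfl (by linarith [hr.1])
      simpa using h1.comp_sub_right r
    have hint2 : IntegrableOn (fun s => f (s - r)) (Ioc r t) volume :=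
      (intervalIntegrable_iff_integrableOn_Ioc_of_le hr.2).1 hII2
    have hFzero : ∀ᵐ s ∂(volume.restrict (Ioc 0 r)), F (s, r) = 0 := by
      filter_upwards [ae_ne_restrict (Ioc 0 r) r,
        ae_restrict_mem measurableSet_Ioc] with s hne hmem
      rw [hF]
      simp only []
      rw [Set.indicator_of_notMem]
      intro hcond
      exact hne (le_antisymm hmem.2 hcond.2)
    have h1 : ∫ s in Ioc 0 r, F (s, r) ∂volume = 0 := integral_eq_zero_of_ae hFzero
    have heqF : ∀ s ∈ Ioc r t, F (s, r) = f (s - r) := by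
      intro s hs
      rw [hF]
      simp only []
      rw [Set.indicator_of_mem (by exact ⟨hr.1, le_of_lt hs.1⟩ :
        (s, r) ∈ {q : ℝ × ℝ | 0 ≤ q.2 ∧ q.2 ≤ q.1})]
    have hint1 : IntegrableOn (fun s => F (s, r)) (Ioc 0 r) volume :=
      (integrable_zero _ _ _).congr (Filter.EventuallyEq.symm hFzero)
    have hint2' : IntegrableOn (fun s => F (s, r)) (Ioc r t) volume :=
      hint2.congr_fun (fun s hs => (heqF s hs).symm) measurableSet_Ioc
    have hsplit : Ioc (0:ℝ) t = Ioc 0 r ∪ Ioc r t := (Set.Ioc_union_Ioc_eq_Ioc hr.1 hr.2).symm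
    rw [hsplit, setIntegral_union (Set.Ioc_disjoint_Ioc_of_le le_rfl) measurableSet_Ioc hint1 hint2',
      h1, zero_add, setIntegral_congr_fun measurableSet_Ioc heqF,
      ← intervalIntegral.integral_of_le hr.2, intervalIntegral.integral_comp_sub_right f r]
    norm_num
  · rw [Set.indicator_of_notMem hr]
    have : ∀ s ∈ Ioc (0:ℝ) t, F (s, r) = 0 := by
      intro s hs
      rw [Set.mem_Icc, not_and_or, not_le, not_le] at hr
      rw [hF]
      simp only []
      rw [Set.indicator_of_notMem]
      rintro ⟨h0r, hrs⟩
      rcases hr with h0 | hti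
      · linarith
      · linarith [hs.2]
    rw [setIntegral_congr_fun measurableSet_Ioc this]
    simp

lemma swap2 (ν : Measure ℝ) [IsFiniteMeasure ν] {t : ℝ} (ht : 0 ≤ t)
    {G φ : ℝ → ℝ} (hGm : Measurable G) {C : ℝ} (hC0 : 0 ≤ C)
    (hC : ∀ x ∈ Icc 0 t, |G x| ≤ C)
    (hφm : Measurable φ) (hφi : IntegrableOn φ (Icc 0 t)) :
    ∫ u in (0:ℝ)..t, ∫ r in Icc 0 (t - u), G (t - u - r) * φ u ∂ν
      = ∫ r in Icc 0 t, (∫ u in (0:ℝ)..(t - r), G (t - r - u) * φ u) ∂ν := by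
  set F : ℝ × ℝ → ℝ := fun q =>
    ({q : ℝ × ℝ | 0 ≤ q.2 ∧ q.2 ≤ t - q.1}).indicator
      (fun q => G (t - q.1 - q.2) * φ q.1) q with hF
  have hSm : MeasurableSet {q : ℝ × ℝ | 0 ≤ q.2 ∧ q.2 ≤ t - q.1} :=
    (measurableSet_le measurable_const measurable_snd).inter
      (measurableSet_le measurable_snd (measurable_const.sub measurable_fst))
  have hFm : Measurable F :=
    Measurable.indicator
      ((hGm.comp ((measurable_const.sub measurable_fst).sub measurable_snd)).mul
        (hφm.comp measurable_fst)) hSm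
  have hK : (∫⁻ x in Icc 0 t, ‖φ x‖₊ ∂volume) < ⊤ := hφi.2
  have hptw : ∀ u ∈ Ioc (0:ℝ) t, ∀ r : ℝ,
      (‖F (u, r)‖₊ : ℝ≥0∞) ≤ ENNReal.ofReal C * ‖φ u‖₊ := by
    intro u hu r
    by_cases hcond : 0 ≤ r ∧ r ≤ t - u
    · have harg : t - u - r ∈ Icc (0:ℝ) t :=
        ⟨by linarith [hcond.2], by linarith [hu.1, hcond.1]⟩
      rw [hF]; simp only []
      rw [Set.indicator_of_mem (by exact hcond : (u,r) ∈ _)]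
      rw [← enorm_eq_nnnorm, ← enorm_eq_nnnorm, Real.enorm_eq_ofReal_abs, Real.enorm_eq_ofReal_abs, ← ENNReal.ofReal_mul hC0]
      apply ENNReal.ofReal_le_ofReal
      rw [abs_mul]
      exact mul_le_mul_of_nonneg_right (hC _ harg) (abs_nonneg _)
    · rw [hF]; simp only []
      rw [Set.indicator_of_notMem (by exact hcond : (u,r) ∉ _)]
      simp
  have hprod : Integrable (Function.uncurry fun u r => F (u, r))
      ((volume.restrict (Ioc 0 t)).prod ν) := by
    constructor
    · exact (hFm.comp (measurable_fst.prodMk measurable_snd)).aestronglyMeasurable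
    · have hmeq : ∫⁻ p, ‖(Function.uncurry fun u r => F (u, r)) p‖₊
            ∂((volume.restrict (Ioc 0 t)).prod ν)
          = ∫⁻ u, (∫⁻ r, (‖F (u, r)‖₊ : ℝ≥0∞) ∂ν) ∂(volume.restrict (Ioc 0 t)) :=
        lintegral_prod _ (hFm.enorm.comp
          (measurable_fst.prodMk measurable_snd)).aemeasurable
      refine lt_of_le_of_lt (le_of_eq hmeq) ?_
      have step1 : ∫⁻ u in Ioc 0 t, (∫⁻ r, (‖F (u, r)‖₊ : ℝ≥0∞) ∂ν) ∂volume
          ≤ ∫⁻ u in Ioc 0 t, (ENNReal.ofReal C * ‖φ u‖₊) * ν univ ∂volume := by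
        refine setLIntegral_mono ((measurable_const.mul hφm.enorm).mul measurable_const) ?_
        intro u hu
        calc ∫⁻ r, (‖F (u, r)‖₊ : ℝ≥0∞) ∂ν
            ≤ ∫⁻ _, ENNReal.ofReal C * ‖φ u‖₊ ∂ν := lintegral_mono (fun r => hptw u hu r)
          _ = (ENNReal.ofReal C * ‖φ u‖₊) * ν univ := lintegral_const _
      refine lt_of_le_of_lt step1 ?_
      have step2 : ∫⁻ u in Ioc 0 t, (ENNReal.ofReal C * ‖φ u‖₊) * ν univ ∂volume
          ≤ ∫⁻ u in Icc 0 t, (ENNReal.ofReal C * ‖φ u‖₊) * ν univ ∂volume :=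
        lintegral_mono' (Measure.restrict_mono Ioc_subset_Icc_self le_rfl) le_rfl
      refine lt_of_le_of_lt step2 ?_
      rw [lintegral_mul_const (f := fun u => ENNReal.ofReal C * (‖φ u‖₊ : ℝ≥0∞)) _
          (measurable_const.mul hφm.nnnorm.coe_nnreal_ennreal),
        lintegral_const_mul _ hφm.nnnorm.coe_nnreal_ennreal]
      exact ENNReal.mul_lt_top (ENNReal.mul_lt_top ENNReal.ofReal_lt_top hK)
        (measure_lt_top _ _)
  rw [intervalIntegral.integral_of_le ht]
  have L1 : ∫ u in Ioc 0 t, (∫ r in Icc 0 (t - u), G (t - u - r) * φ u ∂ν) ∂volume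
      = ∫ u in Ioc 0 t, (∫ r, F (u, r) ∂ν) ∂volume := by
    refine setIntegral_congr_fun measurableSet_Ioc fun u _ => ?_
    rw [← integral_indicator measurableSet_Icc]
    refine integral_congr_ae (Filter.Eventually.of_forall fun r => ?_)
    rw [hF]; simp only []
    by_cases hcond : 0 ≤ r ∧ r ≤ t - u
    · rw [Set.indicator_of_mem (by exact ⟨hcond.1, hcond.2⟩ : r ∈ Icc 0 (t-u)),
        Set.indicator_of_mem (by exact hcond : (u,r) ∈ _)]
    · rw [Set.indicator_of_notMem (by rw [Set.mem_Icc]; exact hcond),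
        Set.indicator_of_notMem (by exact hcond : (u,r) ∉ _)]
  rw [L1, MeasureTheory.integral_integral_swap hprod]
  rw [← integral_indicator (μ := ν)
    (f := fun r => ∫ u in (0:ℝ)..(t - r), G (t - r - u) * φ u) measurableSet_Icc]
  congr 1
  funext r
  by_cases hr : r ∈ Icc (0:ℝ) t
  · rw [Set.indicator_of_mem hr]
    have htr0 : 0 ≤ t - r := by linarith [hr.2]
    have hsplit : Ioc (0:ℝ) t = Ioc 0 (t - r) ∪ Ioc (t - r) t :=
      (Set.Ioc_union_Ioc_eq_Ioc htr0 (by linarith [hr.1])).symm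
    have heq1 : ∀ u ∈ Ioc (0:ℝ) (t - r), F (u, r) = G (t - r - u) * φ u := by
      intro u hu
      rw [hF]; simp only []
      rw [Set.indicator_of_mem (by exact ⟨hr.1, by linarith [hu.2]⟩ : (u,r) ∈ _)]
      ring_nf
    have heq2 : ∀ u ∈ Ioc (t - r) t, F (u, r) = 0 := by
      intro u hu
      rw [hF]; simp only []
      rw [Set.indicator_of_notMem]
      rintro ⟨_, h2⟩
      linarith [hu.1]
    have hint1 : IntegrableOn (fun u => F (u, r)) (Ioc 0 (t - r)) volume := by
      have hdom : IntegrableOn (fun u => C * ‖φ u‖) (Ioc 0 (t - r)) volume :=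
        MeasureTheory.IntegrableOn.mono_set
          (show IntegrableOn (fun x => C * ‖φ x‖) (Icc 0 t) volume from hφi.norm.const_mul C)
          (fun x hx => ⟨le_of_lt hx.1, by linarith [hx.2, hr.1]⟩)
      refine Integrable.mono' hdom ((hFm.comp
        (measurable_id.prodMk measurable_const)).aestronglyMeasurable) ?_
      refine ae_restrict_of_forall_mem measurableSet_Ioc fun u hu => ?_
      rw [heq1 u hu, Real.norm_eq_abs, Real.norm_eq_abs, abs_mul]
      refine mul_le_mul_of_nonneg_right (hC _ ?_) (abs_nonneg _)
      exact ⟨by linarith [hu.2], by linarith [hu.1, hr.1]⟩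
    have hint2 : IntegrableOn (fun u => F (u, r)) (Ioc (t - r) t) volume :=
      (integrable_zero _ _ _).congr (ae_restrict_of_forall_mem measurableSet_Ioc
        fun u hu => (heq2 u hu).symm)
    rw [hsplit, setIntegral_union (Set.Ioc_disjoint_Ioc_of_le le_rfl) measurableSet_Ioc hint1 hint2,
      setIntegral_congr_fun measurableSet_Ioc heq2, integral_zero, add_zero,
      setIntegral_congr_fun measurableSet_Ioc heq1,
      ← intervalIntegral.integral_of_le htr0]
  · rw [Set.indicator_of_notMem hr]
    have : ∀ u ∈ Ioc (0:ℝ) t, F (u, r) = 0 := by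
      intro u hu
      rw [Set.mem_Icc, not_and_or, not_le, not_le] at hr
      rw [hF]; simp only []
      rw [Set.indicator_of_notMem]
      rintro ⟨h1, h2⟩
      rcases hr with h0 | hti
      · linarith
      · linarith [hu.1]
    rw [setIntegral_congr_fun measurableSet_Ioc this]
    simp

lemma swap3 {w : ℝ} (hw : 0 ≤ w) {A φ : ℝ → ℝ} (hAm : Measurable A) {C : ℝ} (hC0 : 0 ≤ C)
    (hC : ∀ x ∈ Icc 0 w, |A x| ≤ C) (hφm : Measurable φ) (hφi : IntegrableOn φ (Icc 0 w)) :
    ∫ v in (0:ℝ)..w, (∫ u in (0:ℝ)..v, A (v - u) * φ u)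
      = ∫ u in (0:ℝ)..w, (∫ x in (0:ℝ)..(w - u), A x) * φ u := by
  set F : ℝ × ℝ → ℝ := fun q =>
    ({q : ℝ × ℝ | 0 < q.2 ∧ q.2 ≤ q.1}).indicator (fun q => A (q.1 - q.2) * φ q.2) q with hF
  have hSm : MeasurableSet {q : ℝ × ℝ | 0 < q.2 ∧ q.2 ≤ q.1} :=
    (measurableSet_lt measurable_const measurable_snd).inter
      (measurableSet_le measurable_snd measurable_fst)
  have hFm : Measurable F :=
    Measurable.indicator
      ((hAm.comp (measurable_fst.sub measurable_snd)).mul (hφm.comp measurable_snd)) hSm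
  have hK : (∫⁻ x in Icc 0 w, ‖φ x‖₊ ∂volume) < ⊤ := hφi.2
  have hptw : ∀ v ∈ Ioc (0:ℝ) w, ∀ u : ℝ, (‖F (v, u)‖₊ : ℝ≥0∞)
      ≤ (Icc 0 w).indicator (fun u => ENNReal.ofReal C * ‖φ u‖₊) u := by
    intro v hv u
    by_cases hcond : 0 < u ∧ u ≤ v
    · have humem : u ∈ Icc (0:ℝ) w := ⟨le_of_lt hcond.1, by linarith [hcond.2, hv.2]⟩
      have harg : v - u ∈ Icc (0:ℝ) w := ⟨by linarith [hcond.2], by linarith [hcond.1, hv.2]⟩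
      rw [hF]; simp only []
      rw [Set.indicator_of_mem (by exact hcond : (v,u) ∈ _),
        Set.indicator_of_mem humem]
      rw [← enorm_eq_nnnorm, ← enorm_eq_nnnorm, Real.enorm_eq_ofReal_abs, Real.enorm_eq_ofReal_abs, ← ENNReal.ofReal_mul hC0]
      apply ENNReal.ofReal_le_ofReal
      rw [abs_mul]
      exact mul_le_mul_of_nonneg_right (hC _ harg) (abs_nonneg _)
    · rw [hF]; simp only []
      rw [Set.indicator_of_notMem (by exact hcond : (v,u) ∉ _)]
      simp
  have hprod : Integrable (Function.uncurry fun v u => F (v, u))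
      ((volume.restrict (Ioc 0 w)).prod volume) := by
    constructor
    · exact (hFm.comp (measurable_fst.prodMk measurable_snd)).aestronglyMeasurable
    · have hmeq : ∫⁻ p, ‖(Function.uncurry fun v u => F (v, u)) p‖₊
            ∂((volume.restrict (Ioc 0 w)).prod volume)
          = ∫⁻ v, (∫⁻ u, (‖F (v, u)‖₊ : ℝ≥0∞) ∂volume) ∂(volume.restrict (Ioc 0 w)) :=
        lintegral_prod _ (hFm.enorm.comp
          (measurable_fst.prodMk measurable_snd)).aemeasurable
      refine lt_of_le_of_lt (le_of_eq hmeq) ?_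
      have hKbound : ∫⁻ u, (Icc 0 w).indicator (fun u => ENNReal.ofReal C * ‖φ u‖₊) u ∂volume
          = ENNReal.ofReal C * ∫⁻ x in Icc 0 w, ‖φ x‖₊ ∂volume := by
        rw [lintegral_indicator measurableSet_Icc, lintegral_const_mul _ hφm.nnnorm.coe_nnreal_ennreal]
      have step1 : ∫⁻ v in Ioc 0 w, (∫⁻ u, (‖F (v, u)‖₊ : ℝ≥0∞) ∂volume) ∂volume
          ≤ ∫⁻ _ in Ioc 0 w, (ENNReal.ofReal C * ∫⁻ x in Icc 0 w, ‖φ x‖₊ ∂volume) ∂volume := by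
        refine setLIntegral_mono measurable_const ?_
        intro v hv
        rw [← hKbound]
        exact lintegral_mono (hptw v hv)
      refine lt_of_le_of_lt step1 ?_
      rw [setLIntegral_const]
      refine ENNReal.mul_lt_top (ENNReal.mul_lt_top ENNReal.ofReal_lt_top hK) ?_
      rw [Real.volume_Ioc]
      exact ENNReal.ofReal_lt_top
  rw [intervalIntegral.integral_of_le hw]
  have L1 : ∫ v in Ioc 0 w, (∫ u in (0:ℝ)..v, A (v - u) * φ u) ∂volume
      = ∫ v in Ioc 0 w, (∫ u, F (v, u) ∂volume) ∂volume := by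
    refine setIntegral_congr_fun measurableSet_Ioc fun v hv => ?_
    rw [intervalIntegral.integral_of_le (le_of_lt hv.1),
      ← integral_indicator measurableSet_Ioc]
    refine integral_congr_ae (Filter.Eventually.of_forall fun u => ?_)
    rw [hF]; simp only []
    by_cases hcond : 0 < u ∧ u ≤ v
    · rw [Set.indicator_of_mem (by exact hcond : u ∈ Ioc 0 v),
        Set.indicator_of_mem (by exact hcond : (v,u) ∈ _)]
    · rw [Set.indicator_of_notMem (by rw [Set.mem_Ioc]; exact hcond),
        Set.indicator_of_notMem (by exact hcond : (v,u) ∉ _)]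
  rw [L1, MeasureTheory.integral_integral_swap hprod]
  have L2 : ∀ u : ℝ, (∫ v in Ioc 0 w, F (v, u) ∂volume)
      = (Ioc 0 w).indicator (fun u => (∫ x in (0:ℝ)..(w - u), A x) * φ u) u := by
    intro u
    by_cases hu : u ∈ Ioc (0:ℝ) w
    · rw [Set.indicator_of_mem hu]
      have hsplit : Ioc (0:ℝ) w = Ioc 0 u ∪ Ioc u w :=
        (Set.Ioc_union_Ioc_eq_Ioc (le_of_lt hu.1) hu.2).symm
      have hzero : ∀ᵐ v ∂(volume.restrict (Ioc 0 u)), F (v, u) = 0 := by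
        filter_upwards [ae_ne_restrict (Ioc 0 u) u,
          ae_restrict_mem measurableSet_Ioc] with v hne hmem
        rw [hF]; simp only []
        rw [Set.indicator_of_notMem]
        rintro ⟨_, h2⟩
        exact hne (le_antisymm hmem.2 h2)
      have heq2 : ∀ v ∈ Ioc u w, F (v, u) = A (v - u) * φ u := by
        intro v hv
        rw [hF]; simp only []
        rw [Set.indicator_of_mem (by exact ⟨hu.1, le_of_lt hv.1⟩ : (v,u) ∈ _)]
      have hint1 : IntegrableOn (fun v => F (v, u)) (Ioc 0 u) volume :=
        (integrable_zero _ _ _).congr (Filter.EventuallyEq.symm hzero)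
      have hint2 : IntegrableOn (fun v => F (v, u)) (Ioc u w) volume := by
        have hfin : volume (Ioc u w) < ⊤ := by rw [Real.volume_Ioc]; exact ENNReal.ofReal_lt_top
        refine Integrable.mono' ((integrableOn_const (C := C * |φ u|) hfin.ne))
          ((hFm.comp (measurable_id.prodMk measurable_const)).aestronglyMeasurable) ?_
        refine ae_restrict_of_forall_mem measurableSet_Ioc fun v hv => ?_
        rw [heq2 v hv, Real.norm_eq_abs, abs_mul]
        refine mul_le_mul_of_nonneg_right (hC _ ?_) (abs_nonneg _)
        exact ⟨by linarith [hv.1, hu.1], by linarith [hv.2, hu.1]⟩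
      rw [hsplit, setIntegral_union (Set.Ioc_disjoint_Ioc_of_le le_rfl) measurableSet_Ioc hint1 hint2,
        integral_eq_zero_of_ae hzero, zero_add,
        setIntegral_congr_fun measurableSet_Ioc heq2, integral_mul_const,
        ← intervalIntegral.integral_of_le hu.2, intervalIntegral.integral_comp_sub_right A u]
      norm_num
    · rw [Set.indicator_of_notMem hu]
      have : ∀ v ∈ Ioc (0:ℝ) w, F (v, u) = 0 := by
        intro v hv
        rw [Set.mem_Ioc, not_and_or, not_lt, not_le] at hu
        rw [hF]; simp only []
        rw [Set.indicator_of_notMem]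
        rintro ⟨h1, h2⟩
        rcases hu with h0 | hwu
        · linarith
        · linarith [hv.2]
      rw [setIntegral_congr_fun measurableSet_Ioc this]
      simp
  calc ∫ u, (∫ v in Ioc 0 w, F (v, u) ∂volume) ∂volume
      = ∫ u, (Ioc 0 w).indicator (fun u => (∫ x in (0:ℝ)..(w - u), A x) * φ u) u ∂volume := by
        refine integral_congr_ae (Filter.Eventually.of_forall fun u => L2 u)
    _ = ∫ u in Ioc 0 w, (∫ x in (0:ℝ)..(w - u), A x) * φ u ∂volume :=
        integral_indicator measurableSet_Ioc
    _ = ∫ u in (0:ℝ)..w, (∫ x in (0:ℝ)..(w - u), A x) * φ u :=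
        (intervalIntegral.integral_of_le hw).symm

lemma bm_kernel_integrableOn {T : ℝ} {A φ : ℝ → ℝ} (hA : BM T A)
    (hφm : Measurable φ) (hφi : IntegrableOn φ (Icc 0 T)) {t : ℝ} (h0 : 0 ≤ t) (hT : t ≤ T) :
    IntegrableOn (fun s => A (t - s) * φ s) (Ioc 0 t) volume := by
  obtain ⟨C, hC0, hC⟩ := hA.2
  have hsub : Ioc (0:ℝ) t ⊆ Icc 0 T := fun x hx => ⟨le_of_lt hx.1, le_trans hx.2 hT⟩
  have hdom : IntegrableOn (fun s => C * ‖φ s‖) (Ioc 0 t) volume :=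
    MeasureTheory.IntegrableOn.mono_set (hφi.norm.const_mul C) hsub
  refine Integrable.mono' hdom
    (((hA.1.comp (measurable_const.sub measurable_id)).mul hφm).aestronglyMeasurable) ?_
  refine ae_restrict_of_forall_mem measurableSet_Ioc fun s hs => ?_
  rw [Real.norm_eq_abs, abs_mul, Real.norm_eq_abs]
  refine mul_le_mul_of_nonneg_right (hC _ ?_) (abs_nonneg _)
  exact ⟨by linarith [hs.2], by linarith [hs.1]⟩

lemma BM.convL {T : ℝ} {A φ : ℝ → ℝ} (hA : BM T A)
    (hφm : Measurable φ) (hφi : IntegrableOn φ (Icc 0 T)) :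
    BM T (fun t => ∫ s in Ioc 0 t, A (t - s) * φ s) := by
  obtain ⟨C, hC0, hC⟩ := hA.2
  constructor
  · have heq : (fun t => ∫ s in Ioc 0 t, A (t - s) * φ s)
        = fun t => ∫ s, ({q : ℝ × ℝ | 0 < q.2 ∧ q.2 ≤ q.1}).indicator
            (fun q => A (q.1 - q.2) * φ q.2) (t, s) ∂volume := by
      funext t
      rw [← integral_indicator measurableSet_Ioc]
      refine integral_congr_ae (Filter.Eventually.of_forall fun s => ?_)
      by_cases hcond : 0 < s ∧ s ≤ t
      · simp [Set.indicator_apply, Set.mem_Ioc, hcond.1, hcond.2]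
      · simp [Set.indicator_apply, Set.mem_Ioc, hcond]
    rw [heq]
    have hFm : Measurable (fun p : ℝ × ℝ =>
        ({q : ℝ × ℝ | 0 < q.2 ∧ q.2 ≤ q.1}).indicator (fun q => A (q.1 - q.2) * φ q.2) p) :=
      Measurable.indicator
        ((hA.1.comp (measurable_fst.sub measurable_snd)).mul (hφm.comp measurable_snd))
        ((measurableSet_lt measurable_const measurable_snd).inter
          (measurableSet_le measurable_snd measurable_fst))
    exact (MeasureTheory.StronglyMeasurable.integral_prod_right
      (f := fun t s => ({q : ℝ × ℝ | 0 < q.2 ∧ q.2 ≤ q.1}).indicator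
        (fun q => A (q.1 - q.2) * φ q.2) (t, s))
      (by exact hFm.stronglyMeasurable)).measurable
  · refine ⟨C * ∫ s in Icc 0 T, ‖φ s‖, by positivity, fun t ht => ?_⟩
    have hint : IntegrableOn (fun s => A (t - s) * φ s) (Ioc 0 t) volume :=
      bm_kernel_integrableOn ⟨hA.1, C, hC0, hC⟩ hφm hφi ht.1 ht.2
    have hsub : Ioc (0:ℝ) t ⊆ Icc 0 T := fun x hx => ⟨le_of_lt hx.1, le_trans hx.2 ht.2⟩
    have hdom : IntegrableOn (fun s => C * ‖φ s‖) (Icc 0 T) volume := hφi.norm.const_mul C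
    calc |∫ s in Ioc 0 t, A (t - s) * φ s|
        ≤ ∫ s in Ioc 0 t, ‖A (t - s) * φ s‖ := by
          rw [← Real.norm_eq_abs]; exact norm_integral_le_integral_norm _
      _ ≤ ∫ s in Ioc 0 t, C * ‖φ s‖ := by
          refine setIntegral_mono_on hint.norm (hdom.mono_set hsub) measurableSet_Ioc ?_
          intro s hs
          rw [Real.norm_eq_abs, abs_mul, Real.norm_eq_abs]
          refine mul_le_mul_of_nonneg_right (hC _ ⟨by linarith [hs.2], ?_⟩) (abs_nonneg _)
          linarith [hs.1, ht.2]
      _ ≤ ∫ s in Icc 0 T, C * ‖φ s‖ := by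
          refine setIntegral_mono_set hdom ?_ (HasSubset.Subset.eventuallyLE hsub)
          exact Filter.Eventually.of_forall fun s => by positivity
      _ = C * ∫ s in Icc 0 T, ‖φ s‖ := integral_const_mul _ _

lemma iI_apply {d : ℕ} {g : ℝ → Fin d → ℝ} {a b : ℝ}
    (hg : IntervalIntegrable g volume a b) (j : Fin d) :
    (∫ s in a..b, g s) j = ∫ s in a..b, g s j := by
  have := (ContinuousLinearMap.proj (R := ℝ) (φ := fun _ : Fin d => ℝ) j
    ).intervalIntegral_comp_comm hg
  simpa using this.symm

lemma vec_integrableOn {T : ℝ} {d : ℕ} {g : ℝ → Fin d → ℝ}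
    (hg : ∀ j, BM T (fun x => g x j)) {A : Set ℝ}
    (hA : MeasurableSet A) (hsub : A ⊆ Icc 0 T) : IntegrableOn g A volume := by
  classical
  choose C hC0 hC using fun j => (hg j).2
  have hfin : volume A < ⊤ :=
    lt_of_le_of_lt (measure_mono hsub) (by simp [Real.volume_Icc])
  have hmeas : Measurable g := measurable_pi_iff.2 fun j => (hg j).1
  refine Integrable.mono' ((integrableOn_const (C := ∑ j, C j) hfin.ne))
    hmeas.aestronglyMeasurable ?_
  refine ae_restrict_of_forall_mem hA fun x hx => ?_
  refine (pi_norm_le_iff_of_nonneg (Finset.sum_nonneg fun j _ => hC0 j)).2 fun j => ?_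
  rw [Real.norm_eq_abs]
  exact le_trans (hC j x (hsub hx)) (Finset.single_le_sum (fun i _ => hC0 i) (Finset.mem_univ j))

lemma vec_intervalIntegrable {T : ℝ} {d : ℕ} {g : ℝ → Fin d → ℝ}
    (hg : ∀ j, BM T (fun x => g x j)) {a b : ℝ} (ha : 0 ≤ a) (hab : a ≤ b) (hb : b ≤ T) :
    IntervalIntegrable g volume a b := by
  rw [intervalIntegrable_iff_integrableOn_Ioc_of_le hab]
  exact vec_integrableOn hg measurableSet_Ioc
    (fun x hx => ⟨le_trans ha (le_of_lt hx.1), le_trans hx.2 hb⟩)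

end S16


namespace S16

lemma key (d : ℕ) (T : ℝ) (hT : 0 < T)
    (μp μn : Fin d → Fin d → Measure ℝ)
    [∀ i j, IsFiniteMeasure (μp i j)] [∀ i j, IsFiniteMeasure (μn i j)]
    (R : ℝ → Matrix (Fin d) (Fin d) ℝ) (hRcont : Continuous R)
    (hRres : ∀ t ∈ Set.Icc (0:ℝ) T, ∀ i k,
      R t i k = (1 : Matrix (Fin d) (Fin d) ℝ) i k
        + ∫ s in (0:ℝ)..t, measConvMat d μp μn R s i k)
    (h : ℝ → Fin d → ℝ) (hhm : Measurable h) (hh : IntegrableOn h (Set.Icc 0 T))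
    (X₀ : Fin d → ℝ) (σ : Matrix (Fin d) (Fin d) ℝ)
    (b : ℝ → Fin d → ℝ) (hbcont : Continuous b)
    (X : ℝ → Fin d → ℝ)
    (hXdef : ∀ t ∈ Set.Icc (0:ℝ) T,
      X t = (R t).mulVec X₀ + (∫ s in (0:ℝ)..t, (R (t - s)).mulVec (h s))
      + σ.mulVec (b t) + ∫ s in (0:ℝ)..t, ((measConvMat d μp μn R (t - s)) * σ).mulVec (b s)) :
    (∀ t ∈ Set.Icc (0:ℝ) T,
      X t = X₀ + (∫ s in (0:ℝ)..t, (h s + measConvVec d μp μn X s)) + σ.mulVec (b t))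
    ∧ ContinuousOn X (Set.Icc 0 T) := by
  classical
  -- scalar components of h
  have hhk : ∀ k, Measurable fun s => h s k := fun k => (measurable_pi_apply k).comp hhm
  have hhik : ∀ k, IntegrableOn (fun s => h s k) (Icc 0 T) volume := fun k =>
    hh.norm.mono' ((hhk k).aestronglyMeasurable)
      (Filter.Eventually.of_forall fun s => by
        simpa [Real.norm_eq_abs] using norm_le_pi_norm (h s) k)
  -- the deterministic data
  set M : ℝ → Matrix (Fin d) (Fin d) ℝ := measConvMat d μp μn R with hMdef
  set c : ℝ → Fin d → ℝ := fun x => σ.mulVec (b x) with hcdef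
  have hccont : Continuous c := by
    have : c = fun x => σ.mulVecLin (b x) := by
      funext x; rw [Matrix.mulVecLin_apply]
    rw [this]
    exact (LinearMap.continuous_of_finiteDimensional σ.mulVecLin).comp hbcont
  have hcbm : ∀ m, BM T fun x => c x m := fun m =>
    BM.of_continuous ((continuous_apply m).comp hccont)
  have hcik : ∀ m, IntegrableOn (fun s => c s m) (Icc 0 T) volume := fun m =>
    (hcbm m).integrableOn_vol measurableSet_Icc (fun x hx => hx)
  have hRbm : ∀ j k, BM T fun x => R x j k := fun j k =>
    BM.of_continuous (hRcont.matrix_elem j k)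
  have hMapply : ∀ x i k, M x i k = ∑ j, ((∫ r in Icc 0 x, R (x - r) j k ∂(μp i j))
      - ∫ r in Icc 0 x, R (x - r) j k ∂(μn i j)) := fun x i k => rfl
  have hMbm : ∀ i k, BM T fun x => M x i k := by
    intro i k
    have : (fun x => M x i k) = fun x => ∑ j, ((∫ r in Icc 0 x, R (x - r) j k ∂(μp i j))
        - ∫ r in Icc 0 x, R (x - r) j k ∂(μn i j)) := by
      funext x; exact hMapply x i k
    rw [this]
    exact BM.finset_sum _ fun j _ => ((hRbm j k).conv (μp i j)).sub ((hRbm j k).conv (μn i j))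
  -- the four pieces of X
  set P1 : ℝ → Fin d → ℝ := fun v => (R v).mulVec X₀ with hP1def
  set F2 : ℝ → Fin d → ℝ := fun v j => ∑ k, ∫ s in Ioc 0 v, R (v - s) j k * h s k with hF2def
  set F4 : ℝ → Fin d → ℝ := fun v j => ∑ m, ∫ s in Ioc 0 v, M (v - s) j m * c s m with hF4def
  have hP1bm : ∀ j, BM T fun v => P1 v j := by
    intro j
    refine BM.of_continuous ?_
    have : (fun v => P1 v j) = fun v => ∑ k, R v j k * X₀ k := by
      funext v; rfl
    rw [this]
    exact continuous_finset_sum _ fun k _ => (hRcont.matrix_elem j k).mul continuous_const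
  have hF2bm : ∀ j, BM T fun v => F2 v j := fun j =>
    BM.finset_sum _ fun k _ => (hRbm j k).convL (hhk k) (hhik k)
  have hF4bm : ∀ j, BM T fun v => F4 v j := fun j =>
    BM.finset_sum _ fun m _ => (hMbm j m).convL ((hcbm m).1) (hcik m)
  -- generic integrability of matrix-kernel times vector
  have hgenint : ∀ (A : ℝ → Matrix (Fin d) (Fin d) ℝ), (∀ j k, BM T fun x => A x j k) →
      ∀ (φ : ℝ → Fin d → ℝ), Measurable φ → IntegrableOn φ (Icc 0 T) volume →
      ∀ v ∈ Icc (0:ℝ) T, IntegrableOn (fun s => (A (v - s)).mulVec (φ s)) (Ioc 0 v) volume := by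
    intro A hA φ hφm hφi v hv
    choose C hC0 hC using fun j => fun k => (hA j k).2
    set CC : ℝ := ∑ j, ∑ k, C j k with hCC
    have hCC0 : 0 ≤ CC := Finset.sum_nonneg fun j _ => Finset.sum_nonneg fun k _ => hC0 j k
    have hsub : Ioc (0:ℝ) v ⊆ Icc 0 T := fun x hx =>
      ⟨le_of_lt hx.1, le_trans hx.2 hv.2⟩
    have hdom : IntegrableOn (fun s => CC * ‖φ s‖) (Ioc 0 v) volume :=
      MeasureTheory.IntegrableOn.mono_set (hφi.norm.const_mul CC) hsub
    refine Integrable.mono' hdom ?_ ?_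
    · refine (measurable_pi_iff.2 fun j => ?_).aestronglyMeasurable
      have hrw : (fun s => (A (v - s)).mulVec (φ s) j)
          = fun s => ∑ k, A (v - s) j k * φ s k := rfl
      rw [hrw]
      exact Finset.measurable_sum _ fun k _ =>
        Measurable.mul (by exact (hA j k).1.comp (measurable_const.sub measurable_id))
          (by exact (measurable_pi_apply k).comp hφm)
    · refine ae_restrict_of_forall_mem measurableSet_Ioc fun s hs => ?_
      have harg : v - s ∈ Icc (0:ℝ) T := ⟨by linarith [hs.2], by linarith [hs.1, hv.2]⟩
      refine (pi_norm_le_iff_of_nonneg (by positivity)).2 fun j => ?_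
      rw [Real.norm_eq_abs]
      calc |(A (v - s)).mulVec (φ s) j| = |∑ k, A (v - s) j k * φ s k| := rfl
        _ ≤ ∑ k, |A (v - s) j k * φ s k| := Finset.abs_sum_le_sum_abs _ _
        _ ≤ ∑ k, C j k * ‖φ s‖ := by
            refine Finset.sum_le_sum fun k _ => ?_
            rw [abs_mul]
            refine mul_le_mul (hC j k _ harg) ?_ (abs_nonneg _) (hC0 j k)
            simpa [Real.norm_eq_abs] using norm_le_pi_norm (φ s) k
        _ = (∑ k, C j k) * ‖φ s‖ := by rw [Finset.sum_mul]
        _ ≤ CC * ‖φ s‖ := by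
            refine mul_le_mul_of_nonneg_right ?_ (norm_nonneg _)
            exact Finset.single_le_sum (f := fun j => ∑ k, C j k)
              (fun i _ => Finset.sum_nonneg fun k _ => hC0 i k) (Finset.mem_univ j)
  -- componentwise decomposition of X on [0,T]
  have hXsum : ∀ v ∈ Icc (0:ℝ) T, ∀ j, X v j = P1 v j + F2 v j + c v j + F4 v j := by
    intro v hv j
    have hI2 : (∫ s in (0:ℝ)..v, (R (v - s)).mulVec (h s)) j = F2 v j := by
      have hint : IntegrableOn (fun s => (R (v - s)).mulVec (h s)) (Ioc 0 v) volume :=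
        hgenint R hRbm h hhm hh v hv
      rw [iI_apply ((intervalIntegrable_iff_integrableOn_Ioc_of_le hv.1).2 hint) j,
        intervalIntegral.integral_of_le hv.1]
      have : ∀ s, (R (v - s)).mulVec (h s) j = ∑ k, R (v - s) j k * h s k := fun s => rfl
      rw [setIntegral_congr_fun measurableSet_Ioc (fun s _ => this s)]
      rw [integral_finset_sum _ fun k _ =>
        bm_kernel_integrableOn (hRbm j k) (hhk k) (hhik k) hv.1 hv.2]
    have hI4 : (∫ s in (0:ℝ)..v, ((M (v - s)) * σ).mulVec (b s)) j = F4 v j := by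
      have heqk : ∀ s, ((M (v - s)) * σ).mulVec (b s) = (M (v - s)).mulVec (c s) := by
        intro s; rw [hcdef]; exact (Matrix.mulVec_mulVec (b s) (M (v - s)) σ).symm
      rw [intervalIntegral.integral_congr (fun s _ => heqk s)]
      have hint : IntegrableOn (fun s => (M (v - s)).mulVec (c s)) (Ioc 0 v) volume :=
        hgenint M hMbm c hccont.measurable (vec_integrableOn hcbm measurableSet_Icc
          (fun x hx => hx)) v hv
      rw [iI_apply ((intervalIntegrable_iff_integrableOn_Ioc_of_le hv.1).2 hint) j,
        intervalIntegral.integral_of_le hv.1]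
      have : ∀ s, (M (v - s)).mulVec (c s) j = ∑ m, M (v - s) j m * c s m := fun s => rfl
      rw [setIntegral_congr_fun measurableSet_Ioc (fun s _ => this s)]
      rw [integral_finset_sum _ fun m _ =>
        bm_kernel_integrableOn (hMbm j m) ((hcbm m).1) (hcik m) hv.1 hv.2]
    have := hXdef v hv
    calc X v j = ((R v).mulVec X₀ + (∫ s in (0:ℝ)..v, (R (v - s)).mulVec (h s))
        + σ.mulVec (b v) + ∫ s in (0:ℝ)..v, ((M (v - s)) * σ).mulVec (b s)) j := by
          rw [← this]
      _ = P1 v j + (∫ s in (0:ℝ)..v, (R (v - s)).mulVec (h s)) j + c v j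
          + (∫ s in (0:ℝ)..v, ((M (v - s)) * σ).mulVec (b s)) j := rfl
      _ = P1 v j + F2 v j + c v j + F4 v j := by rw [hI2, hI4]
  -- the primitive of R
  set Sm : ℝ → Fin d → Fin d → ℝ := fun w j k => ∫ x in (0:ℝ)..w, R x j k with hSmdef
  have hSmcont : ∀ j k, Continuous fun w => Sm w j k := fun j k =>
    intervalIntegral.continuous_primitive
      (fun a b => (hRcont.matrix_elem j k).intervalIntegrable a b) 0
  have hSmbm : ∀ j k, BM T fun w => Sm w j k := fun j k => BM.of_continuous (hSmcont j k)
  -- bounds on subintervals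
  have hbnd : ∀ {g : ℝ → ℝ}, BM T g → ∀ {t : ℝ}, t ≤ T →
      ∃ C, 0 ≤ C ∧ ∀ x ∈ Icc (0:ℝ) t, |g x| ≤ C := by
    intro g hg t htT
    obtain ⟨C, hC0, hC⟩ := hg.2
    exact ⟨C, hC0, fun x hx => hC x ⟨hx.1, le_trans hx.2 htT⟩⟩
  -- inner identity for the h-part
  have hE2inner : ∀ j, ∀ w ∈ Icc (0:ℝ) T, (∫ v in (0:ℝ)..w, F2 v j)
      = ∑ k, ∫ u in (0:ℝ)..w, Sm (w - u) j k * h u k := by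
    intro j w hw
    calc ∫ v in (0:ℝ)..w, F2 v j
        = ∑ k, ∫ v in (0:ℝ)..w, ∫ s in Ioc 0 v, R (v - s) j k * h s k := by
          rw [show (fun v => F2 v j)
              = fun v => ∑ k, ∫ s in Ioc 0 v, R (v - s) j k * h s k from rfl]
          exact intervalIntegral.integral_finset_sum fun k _ =>
            ((hRbm j k).convL (hhk k) (hhik k)).intervalIntegrable le_rfl hw.1 hw.2
      _ = ∑ k, ∫ v in (0:ℝ)..w, ∫ s in (0:ℝ)..v, R (v - s) j k * h s k := by
          refine Finset.sum_congr rfl fun k _ => ?_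
          refine intervalIntegral.integral_congr fun v hv => ?_
          rw [Set.uIcc_of_le hw.1] at hv
          exact (intervalIntegral.integral_of_le hv.1).symm
      _ = ∑ k, ∫ u in (0:ℝ)..w, (∫ x in (0:ℝ)..(w - u), R x j k) * h u k := by
          refine Finset.sum_congr rfl fun k _ => ?_
          obtain ⟨C, hC0, hC⟩ := hbnd (hRbm j k) hw.2
          exact swap3 hw.1 (hRbm j k).1 hC0 hC (hhk k)
            ((hhik k).mono_set (Icc_subset_Icc le_rfl hw.2))
  -- inner identity for the b-part
  have hE34inner : ∀ j, ∀ w ∈ Icc (0:ℝ) T, (∫ v in (0:ℝ)..w, (c v j + F4 v j))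
      = ∑ m, ∫ u in (0:ℝ)..w, R (w - u) j m * c u m := by
    intro j w hw
    have hcII : IntervalIntegrable (fun v => c v j) volume 0 w :=
      (hcbm j).intervalIntegrable le_rfl hw.1 hw.2
    have hF4II : IntervalIntegrable (fun v => F4 v j) volume 0 w :=
      (hF4bm j).intervalIntegrable le_rfl hw.1 hw.2
    have hsplit : ∫ v in (0:ℝ)..w, (c v j + F4 v j)
        = (∫ v in (0:ℝ)..w, c v j) + ∫ v in (0:ℝ)..w, F4 v j :=
      intervalIntegral.integral_add hcII hF4II
    have hF4part : ∫ v in (0:ℝ)..w, F4 v j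
        = (∑ m, ∫ u in (0:ℝ)..w, R (w - u) j m * c u m) - ∫ u in (0:ℝ)..w, c u j := by
      calc ∫ v in (0:ℝ)..w, F4 v j
          = ∑ m, ∫ v in (0:ℝ)..w, ∫ s in Ioc 0 v, M (v - s) j m * c s m := by
            rw [show (fun v => F4 v j)
                = fun v => ∑ m, ∫ s in Ioc 0 v, M (v - s) j m * c s m from rfl]
            exact intervalIntegral.integral_finset_sum fun m _ =>
              ((hMbm j m).convL ((hcbm m).1) (hcik m)).intervalIntegrable le_rfl hw.1 hw.2
        _ = ∑ m, ∫ v in (0:ℝ)..w, ∫ s in (0:ℝ)..v, M (v - s) j m * c s m := by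
            refine Finset.sum_congr rfl fun m _ => ?_
            refine intervalIntegral.integral_congr fun v hv => ?_
            rw [Set.uIcc_of_le hw.1] at hv
            exact (intervalIntegral.integral_of_le hv.1).symm
        _ = ∑ m, ∫ u in (0:ℝ)..w, (∫ x in (0:ℝ)..(w - u), M x j m) * c u m := by
            refine Finset.sum_congr rfl fun m _ => ?_
            obtain ⟨C, hC0, hC⟩ := hbnd (hMbm j m) hw.2
            exact swap3 hw.1 (hMbm j m).1 hC0 hC ((hcbm m).1)
              ((hcik m).mono_set (Icc_subset_Icc le_rfl hw.2))
        _ = ∑ m, ∫ u in (0:ℝ)..w, (R (w - u) j m - (1 : Matrix (Fin d) (Fin d) ℝ) j m)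
              * c u m := by
            refine Finset.sum_congr rfl fun m _ => ?_
            refine intervalIntegral.integral_congr fun u hu => ?_
            rw [Set.uIcc_of_le hw.1] at hu
            have harg : w - u ∈ Icc (0:ℝ) T := ⟨by linarith [hu.2], by linarith [hu.1, hw.2]⟩
            have := hRres (w - u) harg j m
            have : (∫ x in (0:ℝ)..(w - u), M x j m)
                = R (w - u) j m - (1 : Matrix (Fin d) (Fin d) ℝ) j m := by
              rw [hMdef]; linarith [hRres (w - u) harg j m]
            rw [this]
        _ = (∑ m, ∫ u in (0:ℝ)..w, R (w - u) j m * c u m)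
              - ∑ m, ∫ u in (0:ℝ)..w, (1 : Matrix (Fin d) (Fin d) ℝ) j m * c u m := by
            rw [← Finset.sum_sub_distrib]
            refine Finset.sum_congr rfl fun m _ => ?_
            have hII1 : IntervalIntegrable (fun u => R (w - u) j m * c u m) volume 0 w := by
              refine Continuous.intervalIntegrable ?_ _ _
              exact ((hRcont.matrix_elem j m).comp (continuous_const.sub continuous_id)).mul
                ((continuous_apply m).comp hccont)
            have hII2 : IntervalIntegrable
                (fun u => (1 : Matrix (Fin d) (Fin d) ℝ) j m * c u m) volume 0 w := by
              refine Continuous.intervalIntegrable ?_ _ _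
              exact continuous_const.mul ((continuous_apply m).comp hccont)
            rw [← intervalIntegral.integral_sub hII1 hII2]
            refine intervalIntegral.integral_congr fun u _ => ?_
            ring
        _ = (∑ m, ∫ u in (0:ℝ)..w, R (w - u) j m * c u m) - ∫ u in (0:ℝ)..w, c u j := by
            congr 1
            rw [← intervalIntegral.integral_finset_sum fun m _ => ?_]
            · refine intervalIntegral.integral_congr fun u _ => ?_
              have : ∑ m, (1 : Matrix (Fin d) (Fin d) ℝ) j m * c u m
                  = (1 : Matrix (Fin d) (Fin d) ℝ).mulVec (c u) j := rfl
              rw [this, Matrix.one_mulVec]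
            · refine Continuous.intervalIntegrable ?_ _ _
              exact continuous_const.mul ((continuous_apply m).comp hccont)
    rw [hsplit, hF4part]
    ring
  -- convolved pieces
  set Lam : Fin d → Fin d → ℝ → ℝ :=
    fun j k w => ∫ u in Ioc 0 w, Sm (w - u) j k * h u k with hLamdef
  set Th : Fin d → Fin d → ℝ → ℝ :=
    fun j m w => ∫ u in Ioc 0 w, R (w - u) j m * c u m with hThdef
  have hLambm : ∀ j k, BM T (Lam j k) := fun j k =>
    by exact (hSmbm j k).convL (hhk k) (hhik k)
  have hThbm : ∀ j m, BM T (Th j m) := fun j m =>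
    by exact (hRbm j m).convL ((hcbm m).1) (hcik m)
  -- the three convolution pieces of `measConvVec X`
  set CV1 : ℝ → Fin d → ℝ := fun s i => ∑ j, ((∫ r in Icc 0 s, P1 (s - r) j ∂(μp i j))
    - ∫ r in Icc 0 s, P1 (s - r) j ∂(μn i j)) with hCV1def
  set CV2 : ℝ → Fin d → ℝ := fun s i => ∑ j, ((∫ r in Icc 0 s, F2 (s - r) j ∂(μp i j))
    - ∫ r in Icc 0 s, F2 (s - r) j ∂(μn i j)) with hCV2def
  set CV3 : ℝ → Fin d → ℝ := fun s i =>
    ∑ j, ((∫ r in Icc 0 s, (c (s - r) j + F4 (s - r) j) ∂(μp i j))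
    - ∫ r in Icc 0 s, (c (s - r) j + F4 (s - r) j) ∂(μn i j)) with hCV3def
  have hCV1bm : ∀ i, BM T fun s => CV1 s i := fun i =>
    BM.finset_sum _ fun j _ => BM.sub ((hP1bm j).conv (μp i j)) ((hP1bm j).conv (μn i j))
  have hCV2bm : ∀ i, BM T fun s => CV2 s i := fun i =>
    BM.finset_sum _ fun j _ => BM.sub ((hF2bm j).conv (μp i j)) ((hF2bm j).conv (μn i j))
  have hCV3bm : ∀ i, BM T fun s => CV3 s i := fun i =>
    BM.finset_sum _ fun j _ => BM.sub (((hcbm j).add (hF4bm j)).conv (μp i j))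
      (((hcbm j).add (hF4bm j)).conv (μn i j))
  -- decomposition of the measure convolution of X
  have hconvdec : ∀ s ∈ Icc (0:ℝ) T, ∀ i,
      measConvVec d μp μn X s i = CV1 s i + CV2 s i + CV3 s i := by
    intro s hs i
    have hsplitX : ∀ (ν : Measure ℝ) [IsFiniteMeasure ν], ∀ j,
        ∫ r in Icc 0 s, X (s - r) j ∂ν = (∫ r in Icc 0 s, P1 (s - r) j ∂ν)
          + (∫ r in Icc 0 s, F2 (s - r) j ∂ν)
          + (∫ r in Icc 0 s, (c (s - r) j + F4 (s - r) j) ∂ν) := by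
      intro ν _ j
      have hc1 : Integrable (fun r => P1 (s - r) j) (ν.restrict (Icc 0 s)) :=
        (hP1bm j).conv_integrand_integrable ν hs.1 hs.2
      have hc2 : Integrable (fun r => F2 (s - r) j) (ν.restrict (Icc 0 s)) :=
        (hF2bm j).conv_integrand_integrable ν hs.1 hs.2
      have hc3 : Integrable (fun r => c (s - r) j + F4 (s - r) j) (ν.restrict (Icc 0 s)) :=
        ((hcbm j).add (hF4bm j)).conv_integrand_integrable ν hs.1 hs.2
      rw [setIntegral_congr_fun measurableSet_Icc
        (g := fun r => P1 (s - r) j + F2 (s - r) j + (c (s - r) j + F4 (s - r) j))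
        (fun r hr => by
          have harg : s - r ∈ Icc (0:ℝ) T := ⟨by linarith [hr.2], by linarith [hr.1, hs.2]⟩
          rw [hXsum (s - r) harg j]; ring)]
      rw [integral_add (f := fun r => P1 (s - r) j + F2 (s - r) j)
        (g := fun r => c (s - r) j + F4 (s - r) j) (hc1.add hc2) hc3,
        integral_add (f := fun r => P1 (s - r) j) (g := fun r => F2 (s - r) j) hc1 hc2]
    have hunfold : measConvVec d μp μn X s i
        = ∑ j, ((∫ r in Icc 0 s, X (s - r) j ∂(μp i j))
          - ∫ r in Icc 0 s, X (s - r) j ∂(μn i j)) := rfl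
    rw [hunfold]
    calc ∑ j, ((∫ r in Icc 0 s, X (s - r) j ∂(μp i j))
          - ∫ r in Icc 0 s, X (s - r) j ∂(μn i j))
        = ∑ j, (((∫ r in Icc 0 s, P1 (s - r) j ∂(μp i j))
            - ∫ r in Icc 0 s, P1 (s - r) j ∂(μn i j))
          + ((∫ r in Icc 0 s, F2 (s - r) j ∂(μp i j))
            - ∫ r in Icc 0 s, F2 (s - r) j ∂(μn i j))
          + ((∫ r in Icc 0 s, (c (s - r) j + F4 (s - r) j) ∂(μp i j))
            - ∫ r in Icc 0 s, (c (s - r) j + F4 (s - r) j) ∂(μn i j))) := by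
          refine Finset.sum_congr rfl fun j _ => ?_
          rw [hsplitX (μp i j) j, hsplitX (μn i j) j]
          ring
      _ = CV1 s i + CV2 s i + CV3 s i := by
          rw [Finset.sum_add_distrib, Finset.sum_add_distrib]
  -- main identity
  have main : ∀ t ∈ Set.Icc (0:ℝ) T,
      X t = X₀ + (∫ s in (0:ℝ)..t, (h s + measConvVec d μp μn X s)) + σ.mulVec (b t) := by
    intro t ht
    -- identity E1
    have hE1 : ∀ i, (∫ s in (0:ℝ)..t, CV1 s i) = P1 t i - X₀ i := by
      intro i
      have hCV1eq : ∀ s ∈ Icc (0:ℝ) T, CV1 s i = ∑ k, M s i k * X₀ k := by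
        intro s hs
        have hconv1 : ∀ (ν : Measure ℝ) [IsFiniteMeasure ν], ∀ j,
            ∫ r in Icc 0 s, P1 (s - r) j ∂ν
              = ∑ k, (∫ r in Icc 0 s, R (s - r) j k ∂ν) * X₀ k := by
          intro ν _ j
          have hrw : (fun r => P1 (s - r) j) = fun r => ∑ k, R (s - r) j k * X₀ k := rfl
          rw [hrw, integral_finset_sum _ fun k _ =>
            ((hRbm j k).conv_integrand_integrable ν hs.1 hs.2).mul_const (X₀ k)]
          exact Finset.sum_congr rfl fun k _ => integral_mul_const _ _
        calc CV1 s i = ∑ j, ((∑ k, (∫ r in Icc 0 s, R (s - r) j k ∂(μp i j)) * X₀ k)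
              - ∑ k, (∫ r in Icc 0 s, R (s - r) j k ∂(μn i j)) * X₀ k) := by
              refine Finset.sum_congr rfl fun j _ => ?_
              rw [hconv1 (μp i j) j, hconv1 (μn i j) j]
          _ = ∑ j, ∑ k, ((∫ r in Icc 0 s, R (s - r) j k ∂(μp i j))
                - (∫ r in Icc 0 s, R (s - r) j k ∂(μn i j))) * X₀ k := by
              refine Finset.sum_congr rfl fun j _ => ?_
              rw [← Finset.sum_sub_distrib]
              exact Finset.sum_congr rfl fun k _ => by ring
          _ = ∑ k, (∑ j, ((∫ r in Icc 0 s, R (s - r) j k ∂(μp i j))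
                - (∫ r in Icc 0 s, R (s - r) j k ∂(μn i j)))) * X₀ k := by
              rw [Finset.sum_comm]
              exact Finset.sum_congr rfl fun k _ => by rw [Finset.sum_mul]
          _ = ∑ k, M s i k * X₀ k := by
              exact Finset.sum_congr rfl fun k _ => by rw [hMapply s i k]
      calc ∫ s in (0:ℝ)..t, CV1 s i
          = ∫ s in (0:ℝ)..t, ∑ k, M s i k * X₀ k := by
            refine intervalIntegral.integral_congr fun s hs => ?_
            rw [Set.uIcc_of_le ht.1] at hs
            exact hCV1eq s ⟨hs.1, le_trans hs.2 ht.2⟩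
        _ = ∑ k, (∫ s in (0:ℝ)..t, M s i k) * X₀ k := by
            rw [intervalIntegral.integral_finset_sum fun k _ =>
              ((hMbm i k).intervalIntegrable le_rfl ht.1 ht.2).mul_const (X₀ k)]
            exact Finset.sum_congr rfl fun k _ => intervalIntegral.integral_mul_const _ _
        _ = ∑ k, (R t i k - (1 : Matrix (Fin d) (Fin d) ℝ) i k) * X₀ k := by
            refine Finset.sum_congr rfl fun k _ => ?_
            have := hRres t ht i k
            have hval : (∫ s in (0:ℝ)..t, M s i k)
                = R t i k - (1 : Matrix (Fin d) (Fin d) ℝ) i k := by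
              rw [hMdef]; linarith [hRres t ht i k]
            rw [hval]
        _ = P1 t i - X₀ i := by
            have h1 : P1 t i = ∑ k, R t i k * X₀ k := rfl
            have h2 : X₀ i = ∑ k, (1 : Matrix (Fin d) (Fin d) ℝ) i k * X₀ k := by
              have : ∑ k, (1 : Matrix (Fin d) (Fin d) ℝ) i k * X₀ k
                  = (1 : Matrix (Fin d) (Fin d) ℝ).mulVec X₀ i := rfl
              rw [this, Matrix.one_mulVec]
            rw [h1, h2, ← Finset.sum_sub_distrib]
            exact Finset.sum_congr rfl fun k _ => by ring
    -- expansion of the primitive of M via swap1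
    have hMexp : ∀ w ∈ Icc (0:ℝ) T, ∀ i k, (∫ x in (0:ℝ)..w, M x i k)
        = ∑ j, ((∫ r in Icc 0 w, Sm (w - r) j k ∂(μp i j))
          - ∫ r in Icc 0 w, Sm (w - r) j k ∂(μn i j)) := by
      intro w hw i k
      calc ∫ x in (0:ℝ)..w, M x i k
          = ∫ x in (0:ℝ)..w, ∑ j, ((∫ r in Icc 0 x, R (x - r) j k ∂(μp i j))
            - ∫ r in Icc 0 x, R (x - r) j k ∂(μn i j)) := by
            refine intervalIntegral.integral_congr fun x _ => hMapply x i k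
        _ = ∑ j, ∫ x in (0:ℝ)..w, ((∫ r in Icc 0 x, R (x - r) j k ∂(μp i j))
            - ∫ r in Icc 0 x, R (x - r) j k ∂(μn i j)) :=
            intervalIntegral.integral_finset_sum fun j _ =>
              (BM.sub ((hRbm j k).conv (μp i j)) ((hRbm j k).conv (μn i j))).intervalIntegrable
                le_rfl hw.1 hw.2
        _ = ∑ j, ((∫ x in (0:ℝ)..w, ∫ r in Icc 0 x, R (x - r) j k ∂(μp i j))
            - ∫ x in (0:ℝ)..w, ∫ r in Icc 0 x, R (x - r) j k ∂(μn i j)) := by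
            refine Finset.sum_congr rfl fun j _ => ?_
            exact intervalIntegral.integral_sub
              (((hRbm j k).conv (μp i j)).intervalIntegrable le_rfl hw.1 hw.2)
              (((hRbm j k).conv (μn i j)).intervalIntegrable le_rfl hw.1 hw.2)
        _ = ∑ j, ((∫ r in Icc 0 w, Sm (w - r) j k ∂(μp i j))
            - ∫ r in Icc 0 w, Sm (w - r) j k ∂(μn i j)) := by
            refine Finset.sum_congr rfl fun j _ => ?_
            rw [swap1 (μp i j) hw.1 (hRbm j k).1
              ((hRbm j k).integrableOn_vol measurableSet_Icc (Icc_subset_Icc le_rfl hw.2)),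
              swap1 (μn i j) hw.1 (hRbm j k).1
              ((hRbm j k).integrableOn_vol measurableSet_Icc (Icc_subset_Icc le_rfl hw.2))]
    -- identity E2
    have hE2 : ∀ i, (∫ s in (0:ℝ)..t, CV2 s i) = F2 t i - ∫ u in (0:ℝ)..t, h u i := by
      intro i
      -- LHS
      have hswapF2 : ∀ (ν : Measure ℝ) [IsFiniteMeasure ν], ∀ j,
          (∫ s in (0:ℝ)..t, ∫ r in Icc 0 s, F2 (s - r) j ∂ν)
            = ∑ k, ∫ r in Icc 0 t, Lam j k (t - r) ∂ν := by
        intro ν _ j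
        rw [swap1 ν ht.1 (hF2bm j).1
          ((hF2bm j).integrableOn_vol measurableSet_Icc (Icc_subset_Icc le_rfl ht.2))]
        rw [setIntegral_congr_fun measurableSet_Icc
          (g := fun r => ∑ k, Lam j k (t - r)) (fun r hr => ?_)]
        · exact integral_finset_sum _ fun k _ =>
            (hLambm j k).conv_integrand_integrable ν ht.1 ht.2
        · have hw : t - r ∈ Icc (0:ℝ) T := ⟨by linarith [hr.2], by linarith [hr.1, ht.2]⟩
          rw [hE2inner j (t - r) hw]
          refine Finset.sum_congr rfl fun k _ => ?_
          rw [intervalIntegral.integral_of_le hw.1]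
      have hLHS : (∫ s in (0:ℝ)..t, CV2 s i)
          = ∑ k, ∑ j, ((∫ r in Icc 0 t, Lam j k (t - r) ∂(μp i j))
            - ∫ r in Icc 0 t, Lam j k (t - r) ∂(μn i j)) := by
        calc ∫ s in (0:ℝ)..t, CV2 s i
            = ∑ j, ∫ s in (0:ℝ)..t, ((∫ r in Icc 0 s, F2 (s - r) j ∂(μp i j))
              - ∫ r in Icc 0 s, F2 (s - r) j ∂(μn i j)) := by
              rw [show (fun s => CV2 s i) = fun s =>
                ∑ j, ((∫ r in Icc 0 s, F2 (s - r) j ∂(μp i j))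
                  - ∫ r in Icc 0 s, F2 (s - r) j ∂(μn i j)) from rfl]
              exact intervalIntegral.integral_finset_sum fun j _ =>
                (BM.sub ((hF2bm j).conv (μp i j)) ((hF2bm j).conv (μn i j))).intervalIntegrable
                  le_rfl ht.1 ht.2
          _ = ∑ j, ((∫ s in (0:ℝ)..t, ∫ r in Icc 0 s, F2 (s - r) j ∂(μp i j))
              - ∫ s in (0:ℝ)..t, ∫ r in Icc 0 s, F2 (s - r) j ∂(μn i j)) := by
              refine Finset.sum_congr rfl fun j _ => ?_
              exact intervalIntegral.integral_sub
                (((hF2bm j).conv (μp i j)).intervalIntegrable le_rfl ht.1 ht.2)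
                (((hF2bm j).conv (μn i j)).intervalIntegrable le_rfl ht.1 ht.2)
          _ = ∑ j, ((∑ k, ∫ r in Icc 0 t, Lam j k (t - r) ∂(μp i j))
              - ∑ k, ∫ r in Icc 0 t, Lam j k (t - r) ∂(μn i j)) := by
              refine Finset.sum_congr rfl fun j _ => ?_
              rw [hswapF2 (μp i j) j, hswapF2 (μn i j) j]
          _ = ∑ j, ∑ k, ((∫ r in Icc 0 t, Lam j k (t - r) ∂(μp i j))
              - ∫ r in Icc 0 t, Lam j k (t - r) ∂(μn i j)) := by
              exact Finset.sum_congr rfl fun j _ => (Finset.sum_sub_distrib _ _).symm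
          _ = ∑ k, ∑ j, ((∫ r in Icc 0 t, Lam j k (t - r) ∂(μp i j))
              - ∫ r in Icc 0 t, Lam j k (t - r) ∂(μn i j)) := Finset.sum_comm
      -- RHS
      have hIIRk : ∀ k, IntervalIntegrable (fun u => R (t - u) i k * h u k) volume 0 t :=
        fun k => (intervalIntegrable_iff_integrableOn_Ioc_of_le ht.1).2
          (bm_kernel_integrableOn (hRbm i k) (hhk k) (hhik k) ht.1 ht.2)
      have hIIhk : ∀ k, IntervalIntegrable (fun u => h u k) volume 0 t :=
        fun k => (intervalIntegrable_iff_integrableOn_Ioc_of_le ht.1).2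
          ((hhik k).mono_set (fun x hx => ⟨le_of_lt hx.1, le_trans hx.2 ht.2⟩))
      have hIIconv : ∀ (ν : Measure ℝ) [IsFiniteMeasure ν], ∀ j k, IntervalIntegrable
          (fun u => (∫ r in Icc 0 (t - u), Sm (t - u - r) j k ∂ν) * h u k) volume 0 t := by
        intro ν _ j k
        refine (intervalIntegrable_iff_integrableOn_Ioc_of_le ht.1).2 ?_
        exact bm_kernel_integrableOn ((hSmbm j k).conv ν) (hhk k) (hhik k) ht.1 ht.2
      have hswap2 : ∀ (ν : Measure ℝ) [IsFiniteMeasure ν], ∀ j k,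
          (∫ u in (0:ℝ)..t, (∫ r in Icc 0 (t - u), Sm (t - u - r) j k ∂ν) * h u k)
            = ∫ r in Icc 0 t, Lam j k (t - r) ∂ν := by
        intro ν _ j k
        obtain ⟨C, hC0, hC⟩ := hbnd (hSmbm j k) ht.2
        calc ∫ u in (0:ℝ)..t, (∫ r in Icc 0 (t - u), Sm (t - u - r) j k ∂ν) * h u k
            = ∫ u in (0:ℝ)..t, ∫ r in Icc 0 (t - u), Sm (t - u - r) j k * h u k ∂ν := by
              refine intervalIntegral.integral_congr fun u _ => ?_
              rw [integral_mul_const]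
          _ = ∫ r in Icc 0 t, (∫ u in (0:ℝ)..(t - r), Sm (t - r - u) j k * h u k) ∂ν :=
              swap2 ν ht.1 (hSmbm j k).1 hC0 hC (hhk k)
                ((hhik k).mono_set (Icc_subset_Icc le_rfl ht.2))
          _ = ∫ r in Icc 0 t, Lam j k (t - r) ∂ν := by
              refine setIntegral_congr_fun measurableSet_Icc fun r hr => ?_
              rw [intervalIntegral.integral_of_le (by linarith [hr.2] : (0:ℝ) ≤ t - r)]
      have hRHS : F2 t i - (∫ u in (0:ℝ)..t, h u i)
          = ∑ k, ∑ j, ((∫ r in Icc 0 t, Lam j k (t - r) ∂(μp i j))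
            - ∫ r in Icc 0 t, Lam j k (t - r) ∂(μn i j)) := by
        have hF2t : F2 t i = ∑ k, ∫ u in (0:ℝ)..t, R (t - u) i k * h u k := by
          refine Finset.sum_congr rfl fun k _ => ?_
          exact (intervalIntegral.integral_of_le ht.1).symm
        have hht : (∫ u in (0:ℝ)..t, h u i)
            = ∑ k, ∫ u in (0:ℝ)..t, (1 : Matrix (Fin d) (Fin d) ℝ) i k * h u k := by
          rw [← intervalIntegral.integral_finset_sum fun k _ => (hIIhk k).const_mul _]
          refine intervalIntegral.integral_congr fun u _ => ?_
          calc h u i = (1 : Matrix (Fin d) (Fin d) ℝ).mulVec (h u) i := by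
                rw [Matrix.one_mulVec]
            _ = ∑ k, (1 : Matrix (Fin d) (Fin d) ℝ) i k * h u k := rfl
        calc F2 t i - (∫ u in (0:ℝ)..t, h u i)
            = ∑ k, ((∫ u in (0:ℝ)..t, R (t - u) i k * h u k)
              - ∫ u in (0:ℝ)..t, (1 : Matrix (Fin d) (Fin d) ℝ) i k * h u k) := by
              rw [hF2t, hht, ← Finset.sum_sub_distrib]
          _ = ∑ k, ∫ u in (0:ℝ)..t, (R (t - u) i k - (1 : Matrix (Fin d) (Fin d) ℝ) i k)
                * h u k := by
              refine Finset.sum_congr rfl fun k _ => ?_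
              rw [← intervalIntegral.integral_sub (hIIRk k) ((hIIhk k).const_mul _)]
              refine intervalIntegral.integral_congr fun u _ => ?_
              ring
          _ = ∑ k, ∫ u in (0:ℝ)..t, (∑ j, ((∫ r in Icc 0 (t - u), Sm (t - u - r) j k ∂(μp i j))
                - ∫ r in Icc 0 (t - u), Sm (t - u - r) j k ∂(μn i j))) * h u k := by
              refine Finset.sum_congr rfl fun k _ => ?_
              refine intervalIntegral.integral_congr fun u hu => ?_
              rw [Set.uIcc_of_le ht.1] at hu
              have hw : t - u ∈ Icc (0:ℝ) T := ⟨by linarith [hu.2], by linarith [hu.1, ht.2]⟩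
              have hres := hRres t ht i k
              have hval : R (t - u) i k - (1 : Matrix (Fin d) (Fin d) ℝ) i k
                  = ∫ x in (0:ℝ)..(t - u), M x i k := by
                rw [hMdef]; linarith [hRres (t - u) hw i k]
              rw [hval, hMexp (t - u) hw i k]
          _ = ∑ k, ∑ j, ∫ u in (0:ℝ)..t,
                ((∫ r in Icc 0 (t - u), Sm (t - u - r) j k ∂(μp i j)) * h u k
                - (∫ r in Icc 0 (t - u), Sm (t - u - r) j k ∂(μn i j)) * h u k) := by
              refine Finset.sum_congr rfl fun k _ => ?_
              rw [← intervalIntegral.integral_finset_sum fun j _ =>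
                ((hIIconv (μp i j) j k).sub (hIIconv (μn i j) j k))]
              refine intervalIntegral.integral_congr fun u _ => ?_
              rw [Finset.sum_mul]
              exact Finset.sum_congr rfl fun j _ => by ring
          _ = ∑ k, ∑ j, ((∫ r in Icc 0 t, Lam j k (t - r) ∂(μp i j))
                - ∫ r in Icc 0 t, Lam j k (t - r) ∂(μn i j)) := by
              refine Finset.sum_congr rfl fun k _ => Finset.sum_congr rfl fun j _ => ?_
              rw [intervalIntegral.integral_sub (hIIconv (μp i j) j k) (hIIconv (μn i j) j k),
                hswap2 (μp i j) j k, hswap2 (μn i j) j k]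
      rw [hLHS, hRHS]
    -- identity E34
    have hE34 : ∀ i, (∫ s in (0:ℝ)..t, CV3 s i) = F4 t i := by
      intro i
      have hswapCF : ∀ (ν : Measure ℝ) [IsFiniteMeasure ν], ∀ j,
          (∫ s in (0:ℝ)..t, ∫ r in Icc 0 s, (c (s - r) j + F4 (s - r) j) ∂ν)
            = ∑ m, ∫ r in Icc 0 t, Th j m (t - r) ∂ν := by
        intro ν _ j
        rw [swap1 ν ht.1 ((hcbm j).add (hF4bm j)).1
          (((hcbm j).add (hF4bm j)).integrableOn_vol measurableSet_Icc
            (Icc_subset_Icc le_rfl ht.2))]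
        rw [setIntegral_congr_fun measurableSet_Icc
          (g := fun r => ∑ m, Th j m (t - r)) (fun r hr => ?_)]
        · exact integral_finset_sum _ fun m _ =>
            (hThbm j m).conv_integrand_integrable ν ht.1 ht.2
        · have hw : t - r ∈ Icc (0:ℝ) T := ⟨by linarith [hr.2], by linarith [hr.1, ht.2]⟩
          rw [hE34inner j (t - r) hw]
          refine Finset.sum_congr rfl fun m _ => ?_
          rw [intervalIntegral.integral_of_le hw.1]
      have hLHS : (∫ s in (0:ℝ)..t, CV3 s i)
          = ∑ m, ∑ j, ((∫ r in Icc 0 t, Th j m (t - r) ∂(μp i j))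
            - ∫ r in Icc 0 t, Th j m (t - r) ∂(μn i j)) := by
        calc ∫ s in (0:ℝ)..t, CV3 s i
            = ∑ j, ∫ s in (0:ℝ)..t, ((∫ r in Icc 0 s, (c (s - r) j + F4 (s - r) j) ∂(μp i j))
              - ∫ r in Icc 0 s, (c (s - r) j + F4 (s - r) j) ∂(μn i j)) := by
              rw [show (fun s => CV3 s i) = fun s =>
                ∑ j, ((∫ r in Icc 0 s, (c (s - r) j + F4 (s - r) j) ∂(μp i j))
                  - ∫ r in Icc 0 s, (c (s - r) j + F4 (s - r) j) ∂(μn i j)) from rfl]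
              exact intervalIntegral.integral_finset_sum fun j _ =>
                (BM.sub (((hcbm j).add (hF4bm j)).conv (μp i j))
                  (((hcbm j).add (hF4bm j)).conv (μn i j))).intervalIntegrable
                  le_rfl ht.1 ht.2
          _ = ∑ j, ((∫ s in (0:ℝ)..t, ∫ r in Icc 0 s, (c (s - r) j + F4 (s - r) j) ∂(μp i j))
              - ∫ s in (0:ℝ)..t, ∫ r in Icc 0 s, (c (s - r) j + F4 (s - r) j) ∂(μn i j)) := by
              refine Finset.sum_congr rfl fun j _ => ?_
              exact intervalIntegral.integral_sub
                ((((hcbm j).add (hF4bm j)).conv (μp i j)).intervalIntegrable le_rfl ht.1 ht.2)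
                ((((hcbm j).add (hF4bm j)).conv (μn i j)).intervalIntegrable le_rfl ht.1 ht.2)
          _ = ∑ j, ((∑ m, ∫ r in Icc 0 t, Th j m (t - r) ∂(μp i j))
              - ∑ m, ∫ r in Icc 0 t, Th j m (t - r) ∂(μn i j)) := by
              refine Finset.sum_congr rfl fun j _ => ?_
              rw [hswapCF (μp i j) j, hswapCF (μn i j) j]
          _ = ∑ j, ∑ m, ((∫ r in Icc 0 t, Th j m (t - r) ∂(μp i j))
              - ∫ r in Icc 0 t, Th j m (t - r) ∂(μn i j)) :=
              Finset.sum_congr rfl fun j _ => (Finset.sum_sub_distrib _ _).symm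
          _ = ∑ m, ∑ j, ((∫ r in Icc 0 t, Th j m (t - r) ∂(μp i j))
              - ∫ r in Icc 0 t, Th j m (t - r) ∂(μn i j)) := Finset.sum_comm
      have hIIconv3 : ∀ (ν : Measure ℝ) [IsFiniteMeasure ν], ∀ j m, IntervalIntegrable
          (fun s => (∫ r in Icc 0 (t - s), R (t - s - r) j m ∂ν) * c s m) volume 0 t := by
        intro ν _ j m
        refine (intervalIntegrable_iff_integrableOn_Ioc_of_le ht.1).2 ?_
        exact bm_kernel_integrableOn ((hRbm j m).conv ν) ((hcbm m).1) (hcik m) ht.1 ht.2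
      have hswap2' : ∀ (ν : Measure ℝ) [IsFiniteMeasure ν], ∀ j m,
          (∫ s in (0:ℝ)..t, (∫ r in Icc 0 (t - s), R (t - s - r) j m ∂ν) * c s m)
            = ∫ r in Icc 0 t, Th j m (t - r) ∂ν := by
        intro ν _ j m
        obtain ⟨C, hC0, hC⟩ := hbnd (hRbm j m) ht.2
        calc ∫ s in (0:ℝ)..t, (∫ r in Icc 0 (t - s), R (t - s - r) j m ∂ν) * c s m
            = ∫ s in (0:ℝ)..t, ∫ r in Icc 0 (t - s), R (t - s - r) j m * c s m ∂ν := by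
              refine intervalIntegral.integral_congr fun s _ => ?_
              rw [integral_mul_const]
          _ = ∫ r in Icc 0 t, (∫ u in (0:ℝ)..(t - r), R (t - r - u) j m * c u m) ∂ν :=
              swap2 ν ht.1 (hRbm j m).1 hC0 hC ((hcbm m).1)
                ((hcik m).mono_set (Icc_subset_Icc le_rfl ht.2))
          _ = ∫ r in Icc 0 t, Th j m (t - r) ∂ν := by
              refine setIntegral_congr_fun measurableSet_Icc fun r hr => ?_
              rw [intervalIntegral.integral_of_le (by linarith [hr.2] : (0:ℝ) ≤ t - r)]
      have hRHS : F4 t i = ∑ m, ∑ j, ((∫ r in Icc 0 t, Th j m (t - r) ∂(μp i j))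
          - ∫ r in Icc 0 t, Th j m (t - r) ∂(μn i j)) := by
        calc F4 t i = ∑ m, ∫ s in (0:ℝ)..t, M (t - s) i m * c s m := by
              refine Finset.sum_congr rfl fun m _ => ?_
              exact (intervalIntegral.integral_of_le ht.1).symm
          _ = ∑ m, ∫ s in (0:ℝ)..t,
                (∑ j, ((∫ r in Icc 0 (t - s), R (t - s - r) j m ∂(μp i j))
                  - ∫ r in Icc 0 (t - s), R (t - s - r) j m ∂(μn i j))) * c s m := by
              refine Finset.sum_congr rfl fun m _ => ?_
              refine intervalIntegral.integral_congr fun s _ => ?_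
              rw [hMapply (t - s) i m]
          _ = ∑ m, ∑ j, ∫ s in (0:ℝ)..t,
                ((∫ r in Icc 0 (t - s), R (t - s - r) j m ∂(μp i j)) * c s m
                - (∫ r in Icc 0 (t - s), R (t - s - r) j m ∂(μn i j)) * c s m) := by
              refine Finset.sum_congr rfl fun m _ => ?_
              rw [← intervalIntegral.integral_finset_sum fun j _ =>
                ((hIIconv3 (μp i j) j m).sub (hIIconv3 (μn i j) j m))]
              refine intervalIntegral.integral_congr fun s _ => ?_
              rw [Finset.sum_mul]
              exact Finset.sum_congr rfl fun j _ => by ring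
          _ = ∑ m, ∑ j, ((∫ r in Icc 0 t, Th j m (t - r) ∂(μp i j))
                - ∫ r in Icc 0 t, Th j m (t - r) ∂(μn i j)) := by
              refine Finset.sum_congr rfl fun m _ => Finset.sum_congr rfl fun j _ => ?_
              rw [intervalIntegral.integral_sub (hIIconv3 (μp i j) j m) (hIIconv3 (μn i j) j m),
                hswap2' (μp i j) j m, hswap2' (μn i j) j m]
      rw [hLHS, hRHS]
    -- assembly
    have hsub0T : Ioc (0:ℝ) t ⊆ Icc 0 T := fun x hx => ⟨le_of_lt hx.1, le_trans hx.2 ht.2⟩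
    have hIh : IntervalIntegrable h volume 0 t :=
      (intervalIntegrable_iff_integrableOn_Ioc_of_le ht.1).2 (hh.mono_set hsub0T)
    have hCV1II : IntervalIntegrable CV1 volume 0 t :=
      vec_intervalIntegrable hCV1bm le_rfl ht.1 ht.2
    have hCV2II : IntervalIntegrable CV2 volume 0 t :=
      vec_intervalIntegrable hCV2bm le_rfl ht.1 ht.2
    have hCV3II : IntervalIntegrable CV3 volume 0 t :=
      vec_intervalIntegrable hCV3bm le_rfl ht.1 ht.2
    have hIconv : (∫ s in (0:ℝ)..t, (h s + measConvVec d μp μn X s))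
        = (∫ s in (0:ℝ)..t, h s) + ((∫ s in (0:ℝ)..t, CV1 s)
          + (∫ s in (0:ℝ)..t, CV2 s) + (∫ s in (0:ℝ)..t, CV3 s)) := by
      rw [intervalIntegral.integral_congr
        (g := fun s => h s + (CV1 s + CV2 s + CV3 s)) (fun s hs => ?_)]
      · rw [intervalIntegral.integral_add hIh ((hCV1II.add hCV2II).add hCV3II),
          intervalIntegral.integral_add (hCV1II.add hCV2II) hCV3II,
          intervalIntegral.integral_add hCV1II hCV2II]
      · rw [Set.uIcc_of_le ht.1] at hs
        funext i'
        show h s i' + measConvVec d μp μn X s i' = h s i' + (CV1 s i' + CV2 s i' + CV3 s i')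
        rw [hconvdec s ⟨hs.1, le_trans hs.2 ht.2⟩ i']
    funext i
    calc X t i = P1 t i + F2 t i + c t i + F4 t i := hXsum t ht i
      _ = X₀ i + ((∫ s in (0:ℝ)..t, h s) i + ((∫ s in (0:ℝ)..t, CV1 s) i
            + (∫ s in (0:ℝ)..t, CV2 s) i + (∫ s in (0:ℝ)..t, CV3 s) i)) + c t i := by
          rw [iI_apply hCV1II i, iI_apply hCV2II i, iI_apply hCV3II i, iI_apply hIh i,
            hE1 i, hE2 i, hE34 i]
          ring
      _ = (X₀ + (∫ s in (0:ℝ)..t, (h s + measConvVec d μp μn X s)) + σ.mulVec (b t)) i := by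
          rw [hIconv]
          rfl
  -- continuity
  have hconvIntOn : IntegrableOn (fun s => h s + measConvVec d μp μn X s) (Icc 0 T) volume := by
    have h1 : IntegrableOn (fun s => h s + (CV1 s + CV2 s + CV3 s)) (Icc 0 T) volume :=
      hh.add (((vec_integrableOn hCV1bm measurableSet_Icc fun x hx => hx).add
        (vec_integrableOn hCV2bm measurableSet_Icc fun x hx => hx)).add
        (vec_integrableOn hCV3bm measurableSet_Icc fun x hx => hx))
    refine h1.congr_fun (fun s hs => ?_) measurableSet_Icc
    funext i
    show h s i + (CV1 s i + CV2 s i + CV3 s i) = h s i + measConvVec d μp μn X s i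
    rw [hconvdec s hs i]
  refine ⟨main, ?_⟩
  have hXeq : Set.EqOn X (fun t => X₀
      + (∫ s in Ioc 0 t, (h s + measConvVec d μp μn X s) ∂volume) + σ.mulVec (b t))
      (Icc 0 T) := by
    intro τ hτ
    show X τ = X₀ + (∫ s in Ioc 0 τ, (h s + measConvVec d μp μn X s) ∂volume) + σ.mulVec (b τ)
    rw [main τ hτ, intervalIntegral.integral_of_le hτ.1]
  refine ContinuousOn.congr ?_ hXeq
  refine (continuousOn_const.add ?_).add (Continuous.continuousOn ?_)
  · exact intervalIntegral.continuousOn_primitive hconvIntOn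
  · exact hccont

end S16

end S16aux

/-- existence, pathwise form: let `R` be the differential resolvent of the
bounded-variation measure `μ = μp − μn` (`R(0) = I`, `R` continuous and
`R(t) = I + ∫₀ᵗ (μ*R)(s) ds`, the integrated form of `R' = μ*R = R*μ`).  For every
Brownian path `b` (any continuous path with `b 0 = 0`), the process
`X_t = R(t)X₀ + ∫₀ᵗ R(t−s)h(s)ds + ∫₀ᵗ R(t−s)σ dB_s`, the stochastic convolution being
written via pathwise integration by parts as `σ b(t) + ∫₀ᵗ (μ*R)(t−s)σ b(s) ds` (using
`R(0) = I` and local absolute continuity of `R`), is continuous and solves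
`dX_t = (h(t) + ∫_{[0,t]} μ(ds)X_{t−s})dt + σ dB_t` in integral form. -/
theorem stmt16 (d : ℕ) (T : ℝ) (hT : 0 < T)
    (μp μn : Fin d → Fin d → Measure ℝ)
    [∀ i j, IsFiniteMeasure (μp i j)] [∀ i j, IsFiniteMeasure (μn i j)]
    (R : ℝ → Matrix (Fin d) (Fin d) ℝ) (hRcont : Continuous R) (hR0 : R 0 = 1)
    (hRres : ∀ t ∈ Set.Icc (0:ℝ) T, ∀ i k,
      R t i k = (1 : Matrix (Fin d) (Fin d) ℝ) i k
        + ∫ s in (0:ℝ)..t, measConvMat d μp μn R s i k)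
    (hRresR : ∀ t ∈ Set.Icc (0:ℝ) T,
      measConvMat d μp μn R t
        = Matrix.of fun i k => ∑ j, ((∫ s in Set.Icc (0:ℝ) t, R (t - s) i j ∂(μp j k))
            - ∫ s in Set.Icc (0:ℝ) t, R (t - s) i j ∂(μn j k)))
    (h : ℝ → Fin d → ℝ) (hh : IntegrableOn h (Set.Icc 0 T))
    (X₀ : Fin d → ℝ) (σ : Matrix (Fin d) (Fin d) ℝ)
    (b : ℝ → Fin d → ℝ) (hbcont : Continuous b) (hb0 : b 0 = 0)
    (X : ℝ → Fin d → ℝ)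
    (hXdef : ∀ t, X t = (R t).mulVec X₀ + (∫ s in (0:ℝ)..t, (R (t - s)).mulVec (h s))
      + σ.mulVec (b t) + ∫ s in (0:ℝ)..t, ((measConvMat d μp μn R (t - s)) * σ).mulVec (b s)) :
    ContinuousOn X (Set.Icc 0 T) ∧
    ∀ t ∈ Set.Icc (0:ℝ) T,
      X t = X₀ + (∫ s in (0:ℝ)..t, (h s + measConvVec d μp μn X s)) + σ.mulVec (b t) := by
  classical
  have hsm := hh.aestronglyMeasurable
  set h1 : ℝ → Fin d → ℝ := hsm.mk h with hh1def
  have hmeas : Measurable h1 := hsm.stronglyMeasurable_mk.measurable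
  have hae : h =ᵐ[volume.restrict (Set.Icc 0 T)] h1 := hsm.ae_eq_mk
  have hh1 : IntegrableOn h1 (Set.Icc 0 T) volume := hh.congr hae
  have haeT : ∀ᵐ x ∂volume, x ∈ Set.Icc (0:ℝ) T → h x = h1 x :=
    (ae_restrict_iff' measurableSet_Icc).1 hae
  have hint_eq : ∀ t ∈ Set.Icc (0:ℝ) T,
      (∫ s in (0:ℝ)..t, (R (t - s)).mulVec (h s))
        = ∫ s in (0:ℝ)..t, (R (t - s)).mulVec (h1 s) := by
    intro t ht
    refine intervalIntegral.integral_congr_ae ?_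
    filter_upwards [haeT] with x hx hxI
    rw [Set.uIoc_of_le ht.1] at hxI
    rw [hx ⟨le_of_lt hxI.1, le_trans hxI.2 ht.2⟩]
  have hXdef1 : ∀ t ∈ Set.Icc (0:ℝ) T,
      X t = (R t).mulVec X₀ + (∫ s in (0:ℝ)..t, (R (t - s)).mulVec (h1 s))
        + σ.mulVec (b t)
        + ∫ s in (0:ℝ)..t, ((measConvMat d μp μn R (t - s)) * σ).mulVec (b s) := by
    intro t ht
    rw [hXdef t, hint_eq t ht]
  obtain ⟨hmain, hcont⟩ :=
    S16.key d T hT μp μn R hRcont hRres h1 hmeas hh1 X₀ σ b hbcont X hXdef1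
  refine ⟨hcont, fun t ht => ?_⟩
  have hinteq2 : (∫ s in (0:ℝ)..t, (h1 s + measConvVec d μp μn X s))
      = ∫ s in (0:ℝ)..t, (h s + measConvVec d μp μn X s) := by
    refine intervalIntegral.integral_congr_ae ?_
    filter_upwards [haeT] with x hx hxI
    rw [Set.uIoc_of_le ht.1] at hxI
    rw [hx ⟨le_of_lt hxI.1, le_trans hxI.2 ht.2⟩]
  rw [hmain t ht, hinteq2]
end
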